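/- arXiv:2504.00259 — 11 statements merged into one kernel-verified Lean document; each statement's English description precedes it below -/
import Mathlib

section
/- Let E be the n×n matrix over the associative algebra Mat(n,ℂ) ⊆ U(gl_n) whose (i,j) entry is the matrix unit E_{ij} of gl_n (viewed inside the universal enveloping algebra). Then for all i,j,k,l ∈ {1,…,n} and all r,s ≥ 0, [(E^{r+1})_{ij},(E^s)_{kl}] − [(E^r)_{ij},(E^{s+1})_{kl}] = (E^r)_{kj}(E^s)_{il} − (E^s)_{kj}(E^r)_{il}. -/
theorem lem1 {A : Type*} [Ring A] {n : ℕ}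
    (E : Matrix (Fin n) (Fin n) A)
    (hE : ∀ i j k l : Fin n,
      E i j * E k l - E k l * E i j =
        (if j = k then E i l else 0) - (if l = i then E k j else 0)) :
    ∀ (m : ℕ) (i j k l : Fin n),
      (E ^ m) i j * E k l - E k l * (E ^ m) i j =
        (if j = k then (E ^ m) i l else 0) - (if l = i then (E ^ m) k j else 0) := by
  intro m
  induction m with
  | zero =>
    intro i j k l
    clear hE
    simp only [pow_zero, Matrix.one_apply]
    split_ifs <;> subst_vars <;> simp_all
  | succ m ih =>
    intro i j k l
    have hmul : ∀ a b : Fin n, (E ^ (m + 1)) a b = ∑ c, (E ^ m) a c * E c b := by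
      intro a b; rw [pow_succ, Matrix.mul_apply]
    rw [hmul i j, Finset.sum_mul, Finset.mul_sum, ← Finset.sum_sub_distrib]
    have key : ∀ a : Fin n,
        (E ^ m) i a * E a j * E k l - E k l * ((E ^ m) i a * E a j) =
          (E ^ m) i a * ((if j = k then E a l else 0) - (if l = a then E k j else 0))
          + ((if a = k then (E ^ m) i l else 0) - (if l = i then (E ^ m) k a else 0)) * E a j := by
      intro a
      rw [← hE a j k l, ← ih i a k l]
      noncomm_ring
    rw [Finset.sum_congr rfl (fun a _ => key a)]
    by_cases hjk : j = k <;> by_cases hli : l = i <;>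
      simp [hjk, hli, Finset.sum_add_distrib, Finset.sum_sub_distrib, mul_ite, ite_mul,
        Finset.sum_ite_eq, Finset.sum_ite_eq', hmul, sub_mul, mul_sub, Finset.mul_sum] <;> abel


/-- With `E` the matrix over `U(gl_n)` whose entries are the matrix
units `E_{ij}` (satisfying `[E_ij, E_kl] = δ_jk E_il − δ_li E_kj`), for all
`i,j,k,l` and `r,s ≥ 0`:
`[(E^{r+1})_{ij},(E^s)_{kl}] − [(E^r)_{ij},(E^{s+1})_{kl}]
  = (E^r)_{kj}(E^s)_{il} − (E^s)_{kj}(E^r)_{il}`. -/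
theorem stmt_0 {A : Type*} [Ring A] [Algebra ℂ A] {n : ℕ}
    (E : Matrix (Fin n) (Fin n) A)
    (hE : ∀ i j k l : Fin n,
      E i j * E k l - E k l * E i j =
        (if j = k then E i l else 0) - (if l = i then E k j else 0))
    (i j k l : Fin n) (r s : ℕ) :
    ((E ^ (r + 1)) i j * (E ^ s) k l - (E ^ s) k l * (E ^ (r + 1)) i j)
      - ((E ^ r) i j * (E ^ (s + 1)) k l - (E ^ (s + 1)) k l * (E ^ r) i j)
      = (E ^ r) k j * (E ^ s) i l - (E ^ s) k j * (E ^ r) i l := by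
  induction s generalizing k l with
  | zero =>
    have h := lem1 E hE r i j k l
    simp only [pow_zero, Matrix.one_apply, zero_add, pow_one]
    rw [h]
    clear h hE
    split_ifs <;> subst_vars <;> simp_all <;> abel
  | succ s ih =>
    have hmul : ∀ (t : ℕ) (a b : Fin n), (E ^ (t + 1)) a b = ∑ c, (E ^ t) a c * E c b := by
      intro t a b; rw [pow_succ, Matrix.mul_apply]
    rw [hmul (s+1) k l, hmul s k l]
    simp only [Finset.sum_mul, Finset.mul_sum, ← Finset.sum_sub_distrib]
    have key : ∀ a : Fin n,
        ((E ^ (r + 1)) i j * ((E ^ s) k a * E a l)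
            - (E ^ s) k a * E a l * (E ^ (r + 1)) i j)
          - ((E ^ r) i j * ((E ^ (s + 1)) k a * E a l)
            - (E ^ (s + 1)) k a * E a l * (E ^ r) i j)
        = (E ^ s) k a * ((if j = a then (E ^ (r+1)) i l else 0)
              - (if l = i then (E ^ (r+1)) a j else 0))
          - (E ^ (s + 1)) k a * ((if j = a then (E ^ r) i l else 0)
              - (if l = i then (E ^ r) a j else 0))
          + ((E ^ r) k j * (E ^ s) i a - (E ^ s) k j * (E ^ r) i a) * E a l := by
      intro a
      rw [← lem1 E hE (r+1) i j a l, ← lem1 E hE r i j a l, ← ih k a]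
      noncomm_ring
    rw [Finset.sum_congr rfl (fun a _ => key a)]
    have expand : ∀ a : Fin n,
        (E ^ s) k a * ((if j = a then (E ^ (r+1)) i l else 0)
              - (if l = i then (E ^ (r+1)) a j else 0))
          - (E ^ (s + 1)) k a * ((if j = a then (E ^ r) i l else 0)
              - (if l = i then (E ^ r) a j else 0))
          + ((E ^ r) k j * (E ^ s) i a - (E ^ s) k j * (E ^ r) i a) * E a l
        = ((if j = a then (E ^ s) k a * (E ^ (r+1)) i l else 0)
            - (if l = i then (E ^ s) k a * (E ^ (r+1)) a j else 0))
          - ((if j = a then (E ^ (s+1)) k a * (E ^ r) i l else 0)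
            - (if l = i then (E ^ (s+1)) k a * (E ^ r) a j else 0))
          + ((E ^ r) k j * ((E ^ s) i a * E a l)
            - (E ^ s) k j * ((E ^ r) i a * E a l)) := by
      intro a
      split_ifs <;> noncomm_ring
    rw [Finset.sum_congr rfl (fun a _ => expand a)]
    have S2 : ∑ a, (E ^ s) k a * (E ^ (r+1)) a j
        = ∑ a, (E ^ (s+1)) k a * (E ^ r) a j := by
      rw [← Matrix.mul_apply, ← Matrix.mul_apply, ← pow_add, ← pow_add,
        show s + (r + 1) = s + 1 + r by omega]
    have S4 : ∑ a, (E ^ s) i a * E a l = (E ^ (s+1)) i l := (hmul s i l).symm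
    have S5 : ∑ a, (E ^ r) i a * E a l = (E ^ (r+1)) i l := (hmul r i l).symm
    simp only [Finset.sum_add_distrib, Finset.sum_sub_distrib, Finset.sum_ite_eq,
      Finset.mem_univ, if_true, Finset.sum_ite_irrel, ← Finset.mul_sum, S2, S4, S5]
    abel
end

section
/- With E as above, for arbitrary polynomials f, g ∈ ℂ[x], and all i,j,k,l ∈ {1,…,n}: [((x·f)(E))_{ij},(g(E))_{kl}] − [(f(E))_{ij},((x·g)(E))_{kl}] = (f(E))_{kj}(g(E))_{il} − (g(E))_{kj}(f(E))_{il}, where (x·f)(x) = x·f(x) and p(E) denotes evaluation of the polynomial p at the matrix E over U(gl_n). -/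
set_option linter.unusedSectionVars false

open Polynomial Finset


section
variable {A : Type*} [Ring A] [Algebra ℂ A] {n : ℕ} (E : Matrix (Fin n) (Fin n) A)

/-- `G` satisfies the matrix-unit commutation relation against `E`. -/
def MComm (G : Matrix (Fin n) (Fin n) A) : Prop :=
  ∀ i a k l, E i a * G k l - G k l * E i a =
    (if a = k then G i l else 0) - (if l = i then G k a else 0)

omit [Algebra ℂ A] in
lemma one_entry_comm (x : A) (i j : Fin n) :
    (1 : Matrix (Fin n) (Fin n) A) i j * x = x * (1 : Matrix (Fin n) (Fin n) A) i j := by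
  rcases eq_or_ne i j with rfl | h
  · simp
  · simp [Matrix.one_apply, h]

omit [Algebra ℂ A] in
lemma mcomm_one : MComm E 1 := by
  intro i a k l
  simp only [Matrix.one_apply, mul_ite, ite_mul, mul_one, one_mul, mul_zero, zero_mul]
  split_ifs <;> subst_vars <;> simp_all

omit [Algebra ℂ A] in
lemma mcomm_mul {G G' : Matrix (Fin n) (Fin n) A} (hG : MComm E G) (hG' : MComm E G') :
    MComm E (G * G') := by
  intro i a k l
  rw [Matrix.mul_apply, Matrix.mul_apply, Matrix.mul_apply, Finset.mul_sum, Finset.sum_mul,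
    ← Finset.sum_sub_distrib]
  have h : ∀ b ∈ Finset.univ, E i a * (G k b * G' b l) - G k b * G' b l * E i a
      = ((if a = k then G i b else 0) - (if b = i then G k a else 0)) * G' b l
        + G k b * ((if a = b then G' i l else 0) - (if l = i then G' b a else 0)) := by
    intro b _
    rw [← hG i a k b, ← hG' i a b l]
    noncomm_ring
  rw [Finset.sum_congr rfl h]
  have S1 : ∑ b, (if a = k then G i b else 0) * G' b l
      = (if a = k then (G * G') i l else 0) := by
    by_cases hak : a = k <;> simp [hak, Matrix.mul_apply]
  have S2 : ∑ b, (if b = i then G k a else 0) * G' b l = G k a * G' i l := by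
    simp
  have S3 : ∑ b, G k b * (if a = b then G' i l else 0) = G k a * G' i l := by
    simp
  have S4 : ∑ b, G k b * (if l = i then G' b a else 0)
      = (if l = i then (G * G') k a else 0) := by
    by_cases hli : l = i <;> simp [hli, Matrix.mul_apply]
  simp only [sub_mul, mul_sub, Finset.sum_add_distrib, Finset.sum_sub_distrib, S1, S2, S3, S4]
  abel

end

section
variable {A : Type*} [Ring A] [Algebra ℂ A] {n : ℕ} (E : Matrix (Fin n) (Fin n) A)

lemma mcomm_smul {G : Matrix (Fin n) (Fin n) A} (c : ℂ) (hG : MComm E G) : MComm E (c • G) := by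
  intro i a k l
  have h := hG i a k l
  simp only [Matrix.smul_apply, mul_smul_comm, smul_mul_assoc, ← smul_sub, h, smul_ite,
    smul_zero, mul_smul_comm]
  simp [smul_sub]

omit [Algebra ℂ A] in
lemma mcomm_pow (hE : MComm E E) : ∀ p : ℕ, MComm E (E ^ p) := by
  intro p
  induction p with
  | zero => simpa using mcomm_one E
  | succ q ih => rw [pow_succ]; exact mcomm_mul E ih hE

lemma mcomm_aeval (hE : MComm E E) (f : Polynomial ℂ) : MComm E (aeval E f) := by
  induction f using Polynomial.induction_on' with
  | add p q hp hq =>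
    intro i a k l
    have h1 := hp i a k l
    have h2 := hq i a k l
    simp only [map_add, Matrix.add_apply]
    calc E i a * (aeval E p k l + aeval E q k l) - (aeval E p k l + aeval E q k l) * E i a
        = (E i a * aeval E p k l - aeval E p k l * E i a)
          + (E i a * aeval E q k l - aeval E q k l * E i a) := by noncomm_ring
      _ = _ := by rw [h1, h2]; split_ifs <;> abel
  | monomial m a =>
    have : (aeval E (monomial m a) : Matrix (Fin n) (Fin n) A) = a • E ^ m := by
      rw [Polynomial.aeval_monomial, Algebra.smul_def]
    rw [this]
    exact mcomm_smul E a (mcomm_pow E hE m)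

omit [Algebra ℂ A] in
/-- First expansion: commutator of an entry of `E * V` with an entry of `W`. -/
lemma exp1 {W : Matrix (Fin n) (Fin n) A} (hW : MComm E W) (V : Matrix (Fin n) (Fin n) A)
    (i j k l : Fin n) :
    (E * V) i j * W k l - W k l * (E * V) i j
      = (∑ a, E i a * (V a j * W k l - W k l * V a j))
        + W i l * V k j - (if l = i then (W * V) k j else 0) := by
  rw [Matrix.mul_apply, Finset.sum_mul, Finset.mul_sum, ← Finset.sum_sub_distrib]
  have h : ∀ b ∈ Finset.univ, E i b * V b j * W k l - W k l * (E i b * V b j)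
      = E i b * (V b j * W k l - W k l * V b j)
        + ((if b = k then W i l else 0) - (if l = i then W k b else 0)) * V b j := by
    intro b _
    rw [← hW i b k l]
    noncomm_ring
  rw [Finset.sum_congr rfl h, Finset.sum_add_distrib]
  have S1 : ∑ b, ((if b = k then W i l else 0) - (if l = i then W k b else 0)) * V b j
      = W i l * V k j - (if l = i then (W * V) k j else 0) := by
    simp only [sub_mul, Finset.sum_sub_distrib, ite_mul, zero_mul]
    congr 1
    · simp
    · by_cases h2 : l = i <;> simp [h2, Matrix.mul_apply]
  rw [S1]
  abel

omit [Algebra ℂ A] in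
/-- Second expansion: sum of `E i a * (X k j * Y a l)`. -/
lemma exp2 {X : Matrix (Fin n) (Fin n) A} (hX : MComm E X) (Y : Matrix (Fin n) (Fin n) A)
    (i j k l : Fin n) :
    ∑ a, E i a * (X k j * Y a l)
      = X k j * (E * Y) i l + X i j * Y k l - (if j = i then (X * Y) k l else 0) := by
  have h : ∀ b ∈ Finset.univ, E i b * (X k j * Y b l)
      = X k j * (E i b * Y b l)
        + ((if b = k then X i j else 0) - (if j = i then X k b else 0)) * Y b l := by
    intro b _
    rw [← hX i b k j]
    noncomm_ring
  rw [Finset.sum_congr rfl h, Finset.sum_add_distrib, ← Finset.mul_sum, ← Matrix.mul_apply]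
  have S1 : ∑ b, ((if b = k then X i j else 0) - (if j = i then X k b else 0)) * Y b l
      = X i j * Y k l - (if j = i then (X * Y) k l else 0) := by
    simp only [sub_mul, Finset.sum_sub_distrib, ite_mul, zero_mul]
    congr 1
    · simp
    · by_cases h2 : j = i <;> simp [h2, Matrix.mul_apply]
  rw [S1]
  abel

end

section
variable {A : Type*} [Ring A] [Algebra ℂ A] {n : ℕ} (E : Matrix (Fin n) (Fin n) A)

omit [Algebra ℂ A] in
lemma step (hE : MComm E E) {P G : Matrix (Fin n) (Fin n) A} (hP : MComm E P) (hG : MComm E G)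
    (hPG : P * G = G * P) (hEG : E * G = G * E)
    (IH : ∀ i j k l, (E * P) i j * G k l - G k l * (E * P) i j
          - (P i j * (E * G) k l - (E * G) k l * P i j)
        = P k j * G i l - G k j * P i l) :
    ∀ i j k l, (E * (E * P)) i j * G k l - G k l * (E * (E * P)) i j
          - ((E * P) i j * (E * G) k l - (E * G) k l * (E * P) i j)
        = (E * P) k j * G i l - G k j * (E * P) i l := by
  intro i j k l
  have hEGm : MComm E (E * G) := mcomm_mul E hE hG
  have e1 := exp1 E hG (E * P) i j k l
  have e2 := exp1 E hEGm P i j k l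
  have c1 : G * (E * P) = (E * G) * P := by rw [← Matrix.mul_assoc, ← hEG]
  rw [e1, e2, c1]
  have hsum : (∑ a, E i a * ((E * P) a j * G k l - G k l * (E * P) a j))
      - (∑ a, E i a * (P a j * (E * G) k l - (E * G) k l * P a j))
      = (∑ a, E i a * (P k j * G a l)) - ∑ a, E i a * (G k j * P a l) := by
    rw [← Finset.sum_sub_distrib, ← Finset.sum_sub_distrib]
    apply Finset.sum_congr rfl
    intro a _
    rw [← mul_sub, ← mul_sub, IH a j k l, mul_sub]
  have s1 := exp2 E hP G i j k l
  have s2 := exp2 E hG P i j k l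
  have comb : (∑ a, E i a * ((E * P) a j * G k l - G k l * (E * P) a j))
      - (∑ a, E i a * (P a j * (E * G) k l - (E * G) k l * P a j))
      = (P k j * (E * G) i l + P i j * G k l - (if j = i then (G * P) k l else 0))
        - (G k j * (E * P) i l + G i j * P k l - (if j = i then (G * P) k l else 0)) := by
    rw [hsum, s1, s2, hPG]
  have IH2 := IH k j i l
  linear_combination (norm := abel) comb - IH2

end

section
variable {A : Type*} [Ring A] [Algebra ℂ A] {n : ℕ} (E : Matrix (Fin n) (Fin n) A)

omit [Algebra ℂ A] in
lemma key (hE : MComm E E) {G : Matrix (Fin n) (Fin n) A} (hG : MComm E G)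
    (hEG : E * G = G * E) :
    ∀ p : ℕ, ∀ i j k l, (E ^ (p + 1)) i j * G k l - G k l * (E ^ (p + 1)) i j
        - ((E ^ p) i j * (E * G) k l - (E * G) k l * (E ^ p) i j)
      = (E ^ p) k j * G i l - G k j * (E ^ p) i l := by
  intro p
  induction p with
  | zero =>
    intro i j k l
    rw [pow_one, pow_zero, one_entry_comm, sub_self, sub_zero, hG i j k l,
      Matrix.one_apply, Matrix.one_apply]
    split_ifs <;> subst_vars <;> simp_all
  | succ q ih =>
    intro i j k l
    have hcomm : Commute E G := hEG
    have hq : E ^ q * G = G * E ^ q := hcomm.pow_left q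
    have h2 : E ^ (q + 1) = E * E ^ q := pow_succ' E q
    have h1 : E ^ (q + 1 + 1) = E * (E * E ^ q) := by rw [pow_succ', pow_succ']
    rw [h2] at ih
    rw [h1, h2]
    exact step E hE (mcomm_pow E hE q) hG hq hEG ih i j k l

end


/-- With `E` the matrix of matrix units over `U(gl_n)`, for arbitrary
polynomials `f, g ∈ ℂ[x]` and all `i,j,k,l`:
`[((x·f)(E))_{ij},(g(E))_{kl}] − [(f(E))_{ij},((x·g)(E))_{kl}]
  = (f(E))_{kj}(g(E))_{il} − (g(E))_{kj}(f(E))_{il}`. -/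
theorem stmt_1 {A : Type*} [Ring A] [Algebra ℂ A] {n : ℕ}
    (E : Matrix (Fin n) (Fin n) A)
    (hE : ∀ i j k l : Fin n,
      E i j * E k l - E k l * E i j =
        (if j = k then E i l else 0) - (if l = i then E k j else 0))
    (f g : Polynomial ℂ) (i j k l : Fin n) :
    ((aeval E (X * f)) i j * (aeval E g) k l
        - (aeval E g) k l * (aeval E (X * f)) i j)
      - ((aeval E f) i j * (aeval E (X * g)) k l
        - (aeval E (X * g)) k l * (aeval E f) i j)
      = (aeval E f) k j * (aeval E g) i l
        - (aeval E g) k j * (aeval E f) i l := by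
  have hE' : MComm E E := fun i a k l => hE i a k l
  have hG : MComm E (aeval E g) := mcomm_aeval E hE' g
  have hXg : aeval E (X * g) = E * aeval E g := by rw [map_mul, aeval_X]
  have hEG : E * aeval E g = aeval E g * E := by
    rw [← hXg, mul_comm, map_mul, aeval_X]
  rw [hXg]
  induction f using Polynomial.induction_on' with
  | add p q hp hq =>
    simp only [mul_add, map_add, Matrix.add_apply]
    linear_combination (norm := noncomm_ring) hp + hq
  | monomial m a =>
    have h1 : aeval E (monomial m a : Polynomial ℂ) = a • E ^ m := by
      rw [aeval_monomial, Algebra.smul_def]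
    have h2 : aeval E (X * monomial m a) = a • E ^ (m + 1) := by
      rw [map_mul, aeval_X, h1, mul_smul_comm, ← pow_succ']
    have K := key E hE' hG hEG m i j k l
    rw [h1, h2]
    simp only [Matrix.smul_apply, smul_mul_assoc, mul_smul_comm, ← smul_sub]
    rw [K]
end

section
/- Let {p_m} be monic polynomials defined by p_0 = 1, p_{m+1}(x) = (x − a_m)p_m(x) − b_m p_{m-1}(x) with b_0 = 0 (so p_{-1} plays no role). Setting t̃^{(r)}_{ij} := (p_r(E))_{ij} with E the matrix of matrix units over U(gl_n), these elements satisfy, for all r,s ≥ 0 and i,j,k,l: [t̃^{(r+1)}_{ij} + a_r t̃^{(r)}_{ij} + b_r t̃^{(r-1)}_{ij}, t̃^{(s)}_{kl}] − [t̃^{(r)}_{ij}, t̃^{(s+1)}_{kl} + a_s t̃^{(s)}_{kl} + b_s t̃^{(s-1)}_{kl}] = t̃^{(r)}_{kj} t̃^{(s)}_{il} − t̃^{(s)}_{kj} t̃^{(r)}_{il}, where t̃^{(-1)}_{ij} := 0. -/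
open Polynomial

section Aux
variable {A : Type*} [Ring A] {n : ℕ}

/-- commutator -/
def brkt (x y : A) : A := x * y - y * x

lemma brkt_mul_left (x y z : A) : brkt (x * y) z = x * brkt y z + brkt x z * y := by
  simp only [brkt]; noncomm_ring

lemma brkt_mul_right (x y z : A) : brkt x (y * z) = y * brkt x z + brkt x y * z := by
  simp only [brkt]; noncomm_ring

lemma brkt_sum_left {ι : Type*} (s : Finset ι) (f : ι → A) (z : A) :
    brkt (∑ q ∈ s, f q) z = ∑ q ∈ s, brkt (f q) z := by
  simp only [brkt, Finset.sum_mul, Finset.mul_sum, Finset.sum_sub_distrib]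

lemma brkt_sum_right {ι : Type*} (s : Finset ι) (f : ι → A) (z : A) :
    brkt z (∑ q ∈ s, f q) = ∑ q ∈ s, brkt z (f q) := by
  simp only [brkt, Finset.sum_mul, Finset.mul_sum, Finset.sum_sub_distrib]

variable (E : Matrix (Fin n) (Fin n) A)
variable (hE : ∀ i j k l : Fin n,
      E i j * E k l - E k l * E i j =
        (if j = k then E i l else 0) - (if l = i then E k j else 0))

lemma pow_entry (t : ℕ) (x y : Fin n) :
    (E ^ (t + 1)) x y = ∑ q, E x q * (E ^ t) q y := by
  rw [pow_succ', Matrix.mul_apply]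

include hE in
lemma comm1 : ∀ (s : ℕ) (i m k l : Fin n),
    brkt (E i m) ((E ^ s) k l)
      = (if m = k then (E ^ s) i l else 0) - (if l = i then (E ^ s) k m else 0) := by
  intro s
  induction s with
  | zero =>
    intro i m k l
    clear hE
    simp only [pow_zero, Matrix.one_apply, brkt, mul_ite, ite_mul, mul_one, one_mul,
      mul_zero, zero_mul, sub_self]
    split_ifs <;> simp_all
  | succ s ih =>
    intro i m k l
    rw [pow_entry E s k l, brkt_sum_right]
    have h1 : ∀ q, brkt (E i m) (E k q * (E ^ s) q l)
        = E k q * ((if m = q then (E ^ s) i l else 0) - (if l = i then (E ^ s) q m else 0))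
          + ((if m = k then E i q else 0) - (if q = i then E k m else 0)) * (E ^ s) q l := by
      intro q
      rw [brkt_mul_right, ih i m q l]
      have : brkt (E i m) (E k q) = (if m = k then E i q else 0) - (if q = i then E k m else 0) := hE i m k q
      rw [this]
    rw [Finset.sum_congr rfl (fun q _ => h1 q)]
    simp only [mul_sub, sub_mul, mul_ite, ite_mul, mul_zero, zero_mul,
      Finset.sum_add_distrib, Finset.sum_sub_distrib, Finset.sum_ite_eq, Finset.sum_ite_eq',
      Finset.mem_univ, if_true]
    have e1 : (∑ x : Fin n, if m = k then E i x * (E ^ s) x l else 0)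
        = if m = k then (E ^ (s+1)) i l else 0 := by
      split_ifs <;> simp [pow_entry]
    have e2 : (∑ x : Fin n, if l = i then E k x * (E ^ s) x m else 0)
        = if l = i then (E ^ (s+1)) k m else 0 := by
      split_ifs <;> simp [pow_entry]
    rw [e1, e2]
    abel

include hE in
lemma comm2 : ∀ (r s : ℕ) (i j k l : Fin n),
    brkt ((E ^ (r + 1)) i j) ((E ^ s) k l) - brkt ((E ^ r) i j) ((E ^ (s + 1)) k l)
      = (E ^ r) k j * (E ^ s) i l - (E ^ s) k j * (E ^ r) i l := by
  intro r
  induction r with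
  | zero =>
    intro s i j k l
    have h0 : brkt ((E ^ 0) i j) ((E ^ (s + 1)) k l) = 0 := by
      simp only [pow_zero, Matrix.one_apply, brkt]
      split_ifs <;> simp
    rw [h0, sub_zero, pow_one, comm1 E hE s i j k l]
    simp only [pow_zero, Matrix.one_apply, ite_mul, mul_ite, one_mul, mul_one,
      zero_mul, mul_zero]
    clear h0 hE
    split_ifs <;> simp_all
  | succ r ih =>
    intro s i j k l
    rw [pow_entry E (r + 1) i j, pow_entry E r i j, brkt_sum_left, brkt_sum_left,
      ← Finset.sum_sub_distrib]
    have h1 : ∀ q : Fin n,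
        brkt (E i q * (E ^ (r + 1)) q j) ((E ^ s) k l)
          - brkt (E i q * (E ^ r) q j) ((E ^ (s + 1)) k l)
        = E i q * ((E ^ r) k j * (E ^ s) q l - (E ^ s) k j * (E ^ r) q l)
          + ((if q = k then (E ^ s) i l else 0) - (if l = i then (E ^ s) k q else 0))
              * (E ^ (r + 1)) q j
          - ((if q = k then (E ^ (s + 1)) i l else 0)
              - (if l = i then (E ^ (s + 1)) k q else 0)) * (E ^ r) q j := by
      intro q
      rw [brkt_mul_left, brkt_mul_left, comm1 E hE s i q k l, comm1 E hE (s + 1) i q k l]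
      have := ih s q j k l
      rw [show E i q * brkt ((E ^ (r + 1)) q j) ((E ^ s) k l)
            + ((if q = k then (E ^ s) i l else 0) - if l = i then (E ^ s) k q else 0)
              * (E ^ (r + 1)) q j
            - (E i q * brkt ((E ^ r) q j) ((E ^ (s + 1)) k l)
              + ((if q = k then (E ^ (s + 1)) i l else 0)
                  - if l = i then (E ^ (s + 1)) k q else 0) * (E ^ r) q j)
          = E i q * (brkt ((E ^ (r + 1)) q j) ((E ^ s) k l)
              - brkt ((E ^ r) q j) ((E ^ (s + 1)) k l))
            + ((if q = k then (E ^ s) i l else 0) - if l = i then (E ^ s) k q else 0)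
                * (E ^ (r + 1)) q j
            - ((if q = k then (E ^ (s + 1)) i l else 0)
                - if l = i then (E ^ (s + 1)) k q else 0) * (E ^ r) q j
          from by rw [mul_sub]; abel, this]
    rw [Finset.sum_congr rfl (fun q _ => h1 q)]
    have hS : ∀ (u v : ℕ), ∑ q, E i q * ((E ^ u) k j * (E ^ v) q l)
        = (E ^ u) k j * (E ^ (v + 1)) i l + (E ^ u) i j * (E ^ v) k l
          - (if j = i then (E ^ (u + v)) k l else 0) := by
      intro u v
      have expand : ∀ q : Fin n, E i q * ((E ^ u) k j * (E ^ v) q l)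
          = (E ^ u) k j * (E i q * (E ^ v) q l)
            + (if q = k then (E ^ u) i j else 0) * (E ^ v) q l
            - (if j = i then (E ^ u) k q else 0) * (E ^ v) q l := by
        intro q
        have h := comm1 E hE u i q k j
        simp only [brkt] at h
        have h' : E i q * (E ^ u) k j
            = (E ^ u) k j * E i q
              + ((if q = k then (E ^ u) i j else 0) - (if j = i then (E ^ u) k q else 0)) := by
          rw [← h]; abel
        rw [← mul_assoc, h']
        noncomm_ring
      rw [Finset.sum_congr rfl (fun q _ => expand q)]
      rw [Finset.sum_sub_distrib, Finset.sum_add_distrib, ← Finset.mul_sum,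
        ← pow_entry E v i l]
      congr 1
      · congr 1
        simp [ite_mul, zero_mul, Finset.sum_ite_eq']
      · split_ifs with hji
        · rw [pow_add, Matrix.mul_apply]
        · simp
    have hT : ∀ (v w : ℕ),
        ∑ q, ((if q = k then (E ^ v) i l else 0) - (if l = i then (E ^ v) k q else 0))
            * (E ^ w) q j
          = (E ^ v) i l * (E ^ w) k j - (if l = i then (E ^ (v + w)) k j else 0) := by
      intro v w
      simp only [sub_mul, ite_mul, zero_mul]
      rw [Finset.sum_sub_distrib]
      congr 1
      · simp [Finset.sum_ite_eq']
      · split_ifs with hli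
        · rw [pow_add, Matrix.mul_apply]
        · simp
    simp only [mul_sub]
    rw [Finset.sum_sub_distrib, Finset.sum_add_distrib, Finset.sum_sub_distrib,
      hS r s, hS s r, hT s (r + 1), hT (s + 1) r]
    have e1 : s + (r + 1) = (s + 1) + r := by omega
    have e2 : s + r = r + s := by omega
    rw [e1, e2]
    have h2 := ih s k j i l
    simp only [brkt] at h2
    linear_combination (norm := abel1) -h2

include hE in
lemma comm3 [Algebra ℂ A] (P Q : ℂ[X]) (i j k l : Fin n) :
    brkt ((aeval E (X * P)) i j) ((aeval E Q) k l)
      - brkt ((aeval E P) i j) ((aeval E (X * Q)) k l)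
    = (aeval E P) k j * (aeval E Q) i l - (aeval E Q) k j * (aeval E P) i l := by
  have hm : ∀ (c : ℂ) (u : ℕ), aeval E (monomial u c) = c • E ^ u := by
    intro c u
    rw [Polynomial.aeval_monomial, Algebra.smul_def]
  induction P using Polynomial.induction_on' with
  | add p q hp hq =>
    simp only [mul_add, map_add, Matrix.add_apply, brkt, add_mul, mul_add] at hp hq ⊢
    linear_combination (norm := abel1) hp + hq
  | monomial u c =>
    induction Q using Polynomial.induction_on' with
    | add p q hp hq =>
      simp only [mul_add, map_add, Matrix.add_apply, brkt, add_mul, mul_add] at hp hq ⊢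
      linear_combination (norm := abel1) hp + hq
    | monomial v d =>
      rw [X_mul_monomial, X_mul_monomial, hm, hm, hm, hm]
      simp only [brkt, Matrix.smul_apply, smul_mul_assoc, mul_smul_comm, smul_smul,
        ← smul_sub, mul_comm d c]
      exact congrArg (fun x => (c * d) • x) (comm2 E hE u v i j k l)
end Aux



/-- Let `p_0 = 1`, `p_{m+1}(x) = (x − a_m)p_m(x) − b_m p_{m-1}(x)` with
`b_0 = 0`.  Setting `t̃^{(r)}_{ij} := (p_r(E))_{ij}` with `E` the matrix of matrix
units over `U(gl_n)`, these elements satisfy the `OY(gl_n, a, b)` relations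
(with `t̃^{(-1)} := 0`, which together with `b_0 = 0` is captured by truncated
subtraction on the index). -/
theorem stmt_2 {A : Type*} [Ring A] [Algebra ℂ A] {n : ℕ}
    (E : Matrix (Fin n) (Fin n) A)
    (hE : ∀ i j k l : Fin n,
      E i j * E k l - E k l * E i j =
        (if j = k then E i l else 0) - (if l = i then E k j else 0))
    (a b : ℕ → ℂ) (hb0 : b 0 = 0)
    (p : ℕ → Polynomial ℂ)
    (hp0 : p 0 = 1)
    (hp1 : p 1 = X - C (a 0))
    (hrec : ∀ m, 1 ≤ m → p (m + 1) = (X - C (a m)) * p m - C (b m) * p (m - 1))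
    (tt : ℕ → Fin n → Fin n → A)
    (htt : ∀ r i j, tt r i j = (aeval E (p r)) i j)
    (r s : ℕ) (i j k l : Fin n) :
    ((tt (r + 1) i j + a r • tt r i j + b r • tt (r - 1) i j) * tt s k l
        - tt s k l * (tt (r + 1) i j + a r • tt r i j + b r • tt (r - 1) i j))
      - (tt r i j * (tt (s + 1) k l + a s • tt s k l + b s • tt (s - 1) k l)
        - (tt (s + 1) k l + a s • tt s k l + b s • tt (s - 1) k l) * tt r i j)
      = tt r k j * tt s i l - tt s k j * tt r i l := by
  have hC : ∀ (c : ℂ) (q : ℂ[X]), aeval E (C c * q) = c • aeval E q := fun c q => by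
    rw [map_mul, aeval_C, ← Algebra.smul_def]
  have hXp : ∀ m, p (m + 1) + C (a m) * p m + C (b m) * p (m - 1) = X * p m := by
    intro m
    match m with
    | 0 => simp [hp0, hp1, hb0]
    | m + 1 => rw [hrec (m + 1) (by omega)]; ring
  have key : ∀ (m : ℕ) (x y : Fin n),
      tt (m + 1) x y + a m • tt m x y + b m • tt (m - 1) x y
        = (aeval E (X * p m)) x y := by
    intro m x y
    rw [htt, htt, htt, ← hXp m, map_add, map_add, hC, hC, Matrix.add_apply,
      Matrix.add_apply, Matrix.smul_apply, Matrix.smul_apply]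
  rw [key r i j, key s k l, htt r i j, htt s k l, htt r k j, htt s i l,
    htt s k j, htt r i l]
  have := comm3 E hE (p r) (p s) i j k l
  simpa [brkt] using this
end

section
/- In the Yangian Y(gl_n), for each r ≥ 1 define w^{(r)}_{ij} := t^{(r)}_{ij} + Σ_{l=0}^{r-1} p^r_l t^{(l)}_{ij}, where p_r(x) = x^r + Σ_{l<r} p^r_l x^l are monic polynomials satisfying p_{m+1}(x) = (x − a_m)p_m(x) − b_m p_{m-1}(x), p_0 = 1, b_0 = 0, and t^{(0)}_{ij} = δ_{ij}. Then for all r,s ≥ 0 (with w^{(0)}_{ij} = δ_{ij}, w^{(-1)}_{ij} = 0): [w^{(r+1)}_{ij} + a_r w^{(r)}_{ij} + b_r w^{(r-1)}_{ij}, w^{(s)}_{kl}] − [w^{(r)}_{ij}, w^{(s+1)}_{kl} + a_s w^{(s)}_{kl} + b_s w^{(s-1)}_{kl}] = w^{(r)}_{kj} w^{(s)}_{il} − w^{(s)}_{kj} w^{(r)}_{il}. -/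
open Polynomial

/-- In the Yangian `Y(gl_n)` (generators `t^{(r)}_{ij}`, `t^{(0)}_{ij} = δ_ij`,
with the ternary Yangian relations), the elements
`w^{(r)}_{ij} := t^{(r)}_{ij} + Σ_{l<r} p^r_l t^{(l)}_{ij}` (coefficients of the monic
orthogonal polynomials `p_r`) satisfy the `OY(gl_n, a, b)` defining relations. -/
theorem stmt_3 {Y : Type*} [Ring Y] [Algebra ℂ Y] {n : ℕ}
    (t : ℕ → Fin n → Fin n → Y)
    (ht0 : ∀ i j, t 0 i j = if i = j then 1 else 0)
    (hY : ∀ (r s : ℕ) (i j k l : Fin n),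
      (t (r + 1) i j * t s k l - t s k l * t (r + 1) i j)
        - (t r i j * t (s + 1) k l - t (s + 1) k l * t r i j)
      = t r k j * t s i l - t s k j * t r i l)
    (a b : ℕ → ℂ) (hb0 : b 0 = 0)
    (p : ℕ → Polynomial ℂ)
    (hp0 : p 0 = 1)
    (hp1 : p 1 = X - C (a 0))
    (hrec : ∀ m, 1 ≤ m → p (m + 1) = (X - C (a m)) * p m - C (b m) * p (m - 1))
    (w : ℕ → Fin n → Fin n → Y)
    (hw : ∀ r i j, w r i j = ∑ l ∈ Finset.range (r + 1), ((p r).coeff l) • t l i j)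
    (r s : ℕ) (i j k l : Fin n) :
    ((w (r + 1) i j + a r • w r i j + b r • w (r - 1) i j) * w s k l
        - w s k l * (w (r + 1) i j + a r • w r i j + b r • w (r - 1) i j))
      - (w r i j * (w (s + 1) k l + a s • w s k l + b s • w (s - 1) k l)
        - (w (s + 1) k l + a s • w s k l + b s • w (s - 1) k l) * w r i j)
      = w r k j * w s i l - w s k j * w r i l := by
  -- degree bound
  have hdeg : ∀ m, (p m).natDegree ≤ m := by
    intro m
    induction m using Nat.strong_induction_on with
    | _ m ih =>
      match m with
      | 0 => simp [hp0]
      | 1 => simpa [hp1] using natDegree_X_sub_C_le (a 0)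
      | (m+2) =>
        rw [hrec (m+1) (by omega)]
        refine le_trans (natDegree_sub_le _ _) ?_
        rw [max_le_iff]
        constructor
        · refine le_trans natDegree_mul_le ?_
          have h1 : (X - C (a (m+1))).natDegree ≤ 1 := natDegree_X_sub_C_le _
          have h2 := ih (m+1) (by omega)
          omega
        · refine le_trans natDegree_mul_le ?_
          have h2 := ih m (by omega)
          simp only [natDegree_C, Nat.add_sub_cancel]
          omega
  -- polynomial recurrence in the needed form
  have hXp : ∀ m, p (m+1) + C (a m) * p m + C (b m) * p (m-1) = X * p m := by
    intro m
    match m with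
    | 0 => rw [hp0, hp1, hb0, map_zero]; ring
    | (m+1) => rw [hrec (m+1) (by omega)]; ring
  -- sum extension lemma
  have hext : ∀ (q : Polynomial ℂ) (N M : ℕ), q.natDegree < N → N ≤ M →
      ∀ (i j : Fin n), ∑ u ∈ Finset.range N, q.coeff u • t u i j
        = ∑ u ∈ Finset.range M, q.coeff u • t u i j := by
    intro q N M hN hNM i j
    refine Finset.sum_subset (Finset.range_subset_range.2 hNM) ?_
    intro u _ hu
    rw [coeff_eq_zero_of_natDegree_lt (by simp at hu; omega), zero_smul]
  -- the key reexpression of the three-term combination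
  have hA : ∀ (m : ℕ) (i j : Fin n),
      w (m+1) i j + a m • w m i j + b m • w (m-1) i j
        = ∑ u ∈ Finset.range (m+1), (p m).coeff u • t (u+1) i j := by
    intro m i j
    rw [hw, hw, hw]
    rw [hext (p m) (m+1) (m+2) (by have := hdeg m; omega) (by omega),
        hext (p (m-1)) (m-1+1) (m+2) (by have := hdeg (m-1); omega) (by omega)]
    rw [Finset.smul_sum, Finset.smul_sum, ← Finset.sum_add_distrib,
        ← Finset.sum_add_distrib]
    have : ∀ u ∈ Finset.range (m+2),
        (p (m+1)).coeff u • t u i j + a m • ((p m).coeff u • t u i j)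
          + b m • ((p (m-1)).coeff u • t u i j)
          = (X * p m).coeff u • t u i j := by
      intro u _
      rw [smul_smul, smul_smul, ← add_smul, ← add_smul, ← hXp m]
      simp [coeff_add, coeff_C_mul]
    rw [Finset.sum_congr rfl this, Finset.sum_range_succ']
    simp [coeff_X_mul]
  -- product of sums
  have prod_sum : ∀ (N M : ℕ) (c d : Polynomial ℂ) (x y : ℕ → Y),
      (∑ u ∈ Finset.range N, c.coeff u • x u) * (∑ v ∈ Finset.range M, d.coeff v • y v)
        = ∑ u ∈ Finset.range N, ∑ v ∈ Finset.range M,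
            (c.coeff u * d.coeff v) • (x u * y v) := by
    intro N M c d x y
    rw [Finset.sum_mul]
    refine Finset.sum_congr rfl fun u _ => ?_
    rw [Finset.mul_sum]
    refine Finset.sum_congr rfl fun v _ => ?_
    rw [smul_mul_assoc, mul_smul_comm, smul_smul]
  have prod_sum' : ∀ (N M : ℕ) (c d : Polynomial ℂ) (x y : ℕ → Y),
      (∑ v ∈ Finset.range M, d.coeff v • y v) * (∑ u ∈ Finset.range N, c.coeff u • x u)
        = ∑ u ∈ Finset.range N, ∑ v ∈ Finset.range M,
            (c.coeff u * d.coeff v) • (y v * x u) := by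
    intro N M c d x y
    rw [prod_sum M N d c y x, Finset.sum_comm]
    exact Finset.sum_congr rfl fun u _ => Finset.sum_congr rfl fun v _ => by
      rw [mul_comm (d.coeff v)]
  rw [hA r i j, hA s k l, hw r i j, hw s k l, hw r k j, hw s i l, hw s k j, hw r i l]
  rw [prod_sum (r+1) (s+1) (p r) (p s) (fun u => t (u+1) i j) (fun v => t v k l),
      prod_sum' (r+1) (s+1) (p r) (p s) (fun u => t (u+1) i j) (fun v => t v k l),
      prod_sum (r+1) (s+1) (p r) (p s) (fun u => t u i j) (fun v => t (v+1) k l),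
      prod_sum' (r+1) (s+1) (p r) (p s) (fun u => t u i j) (fun v => t (v+1) k l),
      prod_sum (r+1) (s+1) (p r) (p s) (fun u => t u k j) (fun v => t v i l),
      prod_sum' (r+1) (s+1) (p r) (p s) (fun u => t u i l) (fun v => t v k j)]
  rw [← Finset.sum_sub_distrib, ← Finset.sum_sub_distrib, ← Finset.sum_sub_distrib,
      ← Finset.sum_sub_distrib]
  refine Finset.sum_congr rfl fun u hu => ?_
  rw [← Finset.sum_sub_distrib, ← Finset.sum_sub_distrib, ← Finset.sum_sub_distrib,
      ← Finset.sum_sub_distrib]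
  refine Finset.sum_congr rfl fun v hv => ?_
  rw [← smul_sub, ← smul_sub, ← smul_sub, ← smul_sub]
  exact congrArg _ (hY u v i j k l)
end

section
/- In the tensor product of two copies of the algebra OY(gl_N, a, b) with generators t̃^{(r)}_{ij} and t̂^{(r)}_{ij} respectively, define Z^n_{ijkl} := Σ_{m=1}^n (b_1 b_2 ⋯ b_m)^{-1} t̃^{(m)}_{ij} ⊗ t̂^{(m)}_{kl} and A^s_{αβεκ} := t̃^{(s)}_{αβ} ⊗ 1 − 1 ⊗ t̂^{(s)}_{εκ} (with A^{-1} := 0). Then [A^1_{αβεκ}, Z^n_{ijkl}] = δ_{iβ} Z^n_{αjkl} − δ_{αj} Z^n_{iβkl} + δ_{εl} Z^n_{ijkκ} − δ_{kκ} Z^n_{ijεl}. -/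
/-- In the tensor product of two copies of `OY(gl_N, a, b)`
(modelled by two commuting families `tt`, `th` in a common algebra, each
satisfying the `OY(gl_N, a, b)` defining relations), with
`Z^n_{ijkl} := Σ_{m=1}^n (b_1⋯b_m)^{-1} tt^{(m)}_{ij} ⊗ th^{(m)}_{kl}` and
`A^s_{αβεκ} := tt^{(s)}_{αβ} ⊗ 1 − 1 ⊗ th^{(s)}_{εκ}`, one has
`[A^1_{αβεκ}, Z^n_{ijkl}] = δ_{iβ} Z^n_{αjkl} − δ_{αj} Z^n_{iβkl}
  + δ_{εl} Z^n_{ijkκ} − δ_{kκ} Z^n_{ijεl}`. -/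
theorem stmt_5 {B : Type*} [Ring B] [Algebra ℂ B] {N : ℕ}
    (a b : ℕ → ℂ) (hb0 : b 0 = 0) (hb : ∀ m, 1 ≤ m → b m ≠ 0)
    (tt th : ℕ → Fin N → Fin N → B)
    (htt0 : ∀ i j, tt 0 i j = if i = j then 1 else 0)
    (hth0 : ∀ i j, th 0 i j = if i = j then 1 else 0)
    (hcomm : ∀ r s (i j k l : Fin N), tt r i j * th s k l = th s k l * tt r i j)
    (hrelt : ∀ (r s : ℕ) (i j k l : Fin N),
      ((tt (r + 1) i j + a r • tt r i j + b r • tt (r - 1) i j) * tt s k l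
          - tt s k l * (tt (r + 1) i j + a r • tt r i j + b r • tt (r - 1) i j))
        - (tt r i j * (tt (s + 1) k l + a s • tt s k l + b s • tt (s - 1) k l)
          - (tt (s + 1) k l + a s • tt s k l + b s • tt (s - 1) k l) * tt r i j)
        = tt r k j * tt s i l - tt s k j * tt r i l)
    (hrelh : ∀ (r s : ℕ) (i j k l : Fin N),
      ((th (r + 1) i j + a r • th r i j + b r • th (r - 1) i j) * th s k l
          - th s k l * (th (r + 1) i j + a r • th r i j + b r • th (r - 1) i j))
        - (th r i j * (th (s + 1) k l + a s • th s k l + b s • th (s - 1) k l)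
          - (th (s + 1) k l + a s • th s k l + b s • th (s - 1) k l) * th r i j)
        = th r k j * th s i l - th s k j * th r i l)
    (Z : ℕ → Fin N → Fin N → Fin N → Fin N → B)
    (hZ : ∀ n i j k l, Z n i j k l =
      ∑ m ∈ Finset.Icc 1 n, (∏ q ∈ Finset.Icc 1 m, b q)⁻¹ • (tt m i j * th m k l))
    (n : ℕ) (α β ε κ i j k l : Fin N) :
    (tt 1 α β - th 1 ε κ) * Z n i j k l - Z n i j k l * (tt 1 α β - th 1 ε κ)
      = (if i = β then Z n α j k l else 0) - (if α = j then Z n i β k l else 0)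
        + (if ε = l then Z n i j k κ else 0) - (if k = κ then Z n i j ε l else 0) := by
  -- commutator of a degree-1 generator with the `tt` family
  have L1 : ∀ (m : ℕ) (α β i j : Fin N),
      tt 1 α β * tt m i j - tt m i j * tt 1 α β
        = (if i = β then tt m α j else 0) - (if α = j then tt m i β else 0) := by
    intro m α β i j
    have h := hrelt 0 m α β i j
    simp only [htt0, hb0, zero_smul, add_zero, zero_add] at h
    split_ifs at h ⊢ <;>
      simp only [one_mul, mul_one, zero_mul, mul_zero, smul_zero, sub_zero, zero_sub,
        Algebra.smul_mul_assoc, Algebra.mul_smul_comm, sub_self] at h ⊢ <;>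
      · rw [← h]
        simp only [add_mul, mul_add, Algebra.smul_mul_assoc, Algebra.mul_smul_comm,
          one_mul, mul_one, zero_mul, mul_zero, add_zero, smul_zero]
        try abel
  -- commutator of a degree-1 generator with the `th` family
  have L2 : ∀ (m : ℕ) (α β i j : Fin N),
      th 1 α β * th m i j - th m i j * th 1 α β
        = (if i = β then th m α j else 0) - (if α = j then th m i β else 0) := by
    intro m α β i j
    have h := hrelh 0 m α β i j
    simp only [hth0, hb0, zero_smul, add_zero, zero_add] at h
    split_ifs at h ⊢ <;>
      simp only [one_mul, mul_one, zero_mul, mul_zero, smul_zero, sub_zero, zero_sub,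
        Algebra.smul_mul_assoc, Algebra.mul_smul_comm, sub_self] at h ⊢ <;>
      · rw [← h]
        simp only [add_mul, mul_add, Algebra.smul_mul_assoc, Algebra.mul_smul_comm,
          one_mul, mul_one, zero_mul, mul_zero, add_zero, smul_zero]
        try abel
  -- per-term commutator identity
  have key : ∀ m : ℕ,
      (tt 1 α β - th 1 ε κ) * (tt m i j * th m k l)
          - (tt m i j * th m k l) * (tt 1 α β - th 1 ε κ)
        = (if i = β then tt m α j * th m k l else 0)
            - (if α = j then tt m i β * th m k l else 0)
            + (if ε = l then tt m i j * th m k κ else 0)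
            - (if k = κ then tt m i j * th m ε l else 0) := by
    intro m
    have step : (tt 1 α β - th 1 ε κ) * (tt m i j * th m k l)
          - (tt m i j * th m k l) * (tt 1 α β - th 1 ε κ)
        = (tt 1 α β * tt m i j - tt m i j * tt 1 α β) * th m k l
            - tt m i j * (th 1 ε κ * th m k l - th m k l * th 1 ε κ) := by
      have h1 : tt 1 α β * th m k l = th m k l * tt 1 α β := hcomm 1 m α β k l
      have h2 : tt m i j * th 1 ε κ = th 1 ε κ * tt m i j := hcomm m 1 i j ε κ
      have e1 : th 1 ε κ * (tt m i j * th m k l)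
          = tt m i j * (th 1 ε κ * th m k l) := by
        rw [← mul_assoc, ← h2, mul_assoc]
      simp only [sub_mul, mul_sub, mul_assoc]
      rw [e1, ← h1]
      abel
    rw [step, L1 m α β i j, L2 m ε κ k l]
    split_ifs <;>
      simp only [sub_mul, mul_sub, zero_mul, mul_zero, sub_zero, zero_sub, add_zero,
        zero_add, sub_self, neg_neg, mul_neg, neg_mul] <;> abel
  -- now sum up
  have e1 : (if i = β then Z n α j k l else 0)
      = ∑ m ∈ Finset.Icc 1 n, (∏ q ∈ Finset.Icc 1 m, b q)⁻¹ •
          (if i = β then tt m α j * th m k l else 0) := by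
    split_ifs <;> simp [hZ]
  have e2 : (if α = j then Z n i β k l else 0)
      = ∑ m ∈ Finset.Icc 1 n, (∏ q ∈ Finset.Icc 1 m, b q)⁻¹ •
          (if α = j then tt m i β * th m k l else 0) := by
    split_ifs <;> simp [hZ]
  have e3 : (if ε = l then Z n i j k κ else 0)
      = ∑ m ∈ Finset.Icc 1 n, (∏ q ∈ Finset.Icc 1 m, b q)⁻¹ •
          (if ε = l then tt m i j * th m k κ else 0) := by
    split_ifs <;> simp [hZ]
  have e4 : (if k = κ then Z n i j ε l else 0)
      = ∑ m ∈ Finset.Icc 1 n, (∏ q ∈ Finset.Icc 1 m, b q)⁻¹ •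
          (if k = κ then tt m i j * th m ε l else 0) := by
    split_ifs <;> simp [hZ]
  rw [hZ n i j k l, e1, e2, e3, e4, Finset.mul_sum, Finset.sum_mul,
    ← Finset.sum_sub_distrib, ← Finset.sum_sub_distrib, ← Finset.sum_add_distrib,
    ← Finset.sum_sub_distrib]
  refine Finset.sum_congr rfl fun m _ => ?_
  rw [Algebra.mul_smul_comm, Algebra.smul_mul_assoc, ← smul_sub, key m]
  split_ifs <;> simp [smul_sub, smul_add]
end

section
/- In the algebra OY_β(gl_n) (the case a_r = α, b_r = β for r ≥ 1, β ≠ 0, with α = 0), the defining relations imply, for all r, s ≥ 0 and indices i,j,k,l: [t̃^{(r)}_{ij}, t̃^{(s)}_{kl}] = Σ_{p,m ≥ 0, m−s ≤ p ≤ r−m−1} β^m ( t̃^{(r−p−m−1)}_{kj} t̃^{(p+s−m)}_{il} − t̃^{(p+s−m)}_{kj} t̃^{(r−p−m−1)}_{il} ). -/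
open Finset

set_option linter.unusedSectionVars false

section Stmt7Aux

variable {Y : Type*} [AddCommGroup Y] [Module ℂ Y]

private lemma stmt7_half {x : Y} (h : x = -x) : x = 0 := by
  have h2 : (2:ℂ) • x = 0 := by
    rw [two_smul]; nth_rewrite 1 [h]; abel
  have h3 : ((2:ℂ)⁻¹ * 2) • x = 0 := by rw [mul_smul, h2, smul_zero]
  rw [show ((2:ℂ)⁻¹ * 2) = 1 by norm_num, one_smul] at h3
  exact h3

private lemma stmt7_diag (G : ℕ → ℕ → Y) (hG : ∀ a b, G b a = -G a b) (a : ℕ) :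
    G a a = 0 :=
  stmt7_half (hG a a)

private lemma stmt7_antidiag_zero (G : ℕ → ℕ → Y) (hG : ∀ a b, G b a = -G a b) (d : ℕ) :
    ∑ a ∈ Finset.range (d+1), G a (d-a) = 0 := by
  apply stmt7_half
  calc ∑ a ∈ Finset.range (d+1), G a (d-a)
      = ∑ j ∈ Finset.range (d+1), G (d+1-1-j) (d-(d+1-1-j)) :=
        (Finset.sum_range_reflect (fun a => G a (d-a)) (d+1)).symm
    _ = ∑ j ∈ Finset.range (d+1), -(G j (d-j)) := by
        apply Finset.sum_congr rfl
        intro j hj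
        have hj' : j ≤ d := by
          have := Finset.mem_range.mp hj; omega
        rw [show d+1-1-j = d-j from by omega, show d - (d-j) = j from by omega]
        exact hG j (d-j)
    _ = -∑ j ∈ Finset.range (d+1), G j (d-j) := by rw [Finset.sum_neg_distrib]

private def stmt7H (G : ℕ → ℕ → Y) (r s m : ℕ) : Y :=
  ∑ a ∈ Finset.range (r - m), if a ≤ r + s - 1 - 2*m then G a (r + s - 1 - 2*m - a) else 0

private def stmt7S (β : ℂ) (G : ℕ → ℕ → Y) (r s : ℕ) : Y :=
  ∑ m ∈ Finset.range r, β^m • stmt7H G r s m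

private def stmt7E (β : ℂ) (G : ℕ → ℕ → Y) (r s : ℕ) : Y :=
  ∑ m ∈ Finset.range (r+1), β^m • (if m ≤ s then G (r-m) (s-m) else 0)

private lemma stmt7_inner (G : ℕ → ℕ → Y) (hG : ∀ a b, G b a = -G a b)
    {r m : ℕ} (s : ℕ) (hm : m < r) :
    ∑ p ∈ Finset.Icc (m - s) (r - m - 1), G (r - p - m - 1) (p + s - m)
      = stmt7H G r s m := by
  unfold stmt7H
  by_cases hd : r + s ≤ 2*m
  · rw [Finset.Icc_eq_empty (by omega : ¬ (m - s ≤ r - m - 1)), Finset.sum_empty]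
    rw [Finset.sum_eq_single_of_mem 0 (Finset.mem_range.mpr (by omega))]
    · rw [if_pos (Nat.zero_le _), show r + s - 1 - 2*m - 0 = 0 from by omega]
      exact (stmt7_diag G hG 0).symm
    · intro b hb hb0
      rw [if_neg (by omega)]
  · rw [← Finset.sum_filter]
    apply Finset.sum_nbij' (fun p => r - 1 - m - p) (fun a => r - 1 - m - a)
    · intro p hp
      rw [Finset.mem_Icc] at hp
      rw [Finset.mem_filter, Finset.mem_range]
      omega
    · intro a ha
      rw [Finset.mem_filter, Finset.mem_range] at ha
      rw [Finset.mem_Icc]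
      omega
    · intro p hp
      rw [Finset.mem_Icc] at hp
      omega
    · intro a ha
      rw [Finset.mem_filter, Finset.mem_range] at ha
      omega
    · intro p hp
      rw [Finset.mem_Icc] at hp
      rw [show r - p - m - 1 = r - 1 - m - p from by omega,
        show p + s - m = r + s - 1 - 2*m - (r - 1 - m - p) from by omega]

private lemma stmt7_step (G : ℕ → ℕ → Y) {r m : ℕ} (s : ℕ) (hm : m < r) :
    stmt7H G (r+1) s m = stmt7H G r (s+1) m + (if m ≤ s then G (r-m) (s-m) else 0) := by
  unfold stmt7H
  rw [show r+1+s-1-2*m = r+s-2*m from by omega, show r+(s+1)-1-2*m = r+s-2*m from by omega,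
    show r+1-m = (r-m)+1 from by omega, Finset.sum_range_succ]
  congr 1
  by_cases hms : m ≤ s
  · rw [if_pos (by omega : r-m ≤ r+s-2*m), if_pos hms,
      show r+s-2*m-(r-m) = s-m from by omega]
  · rw [if_neg (by omega), if_neg hms]

private lemma stmt7_top (G : ℕ → ℕ → Y) (hG : ∀ a b, G b a = -G a b) (r s : ℕ) :
    stmt7H G (r+1) s r = if r ≤ s then G (r-r) (s-r) else 0 := by
  unfold stmt7H
  rw [show r+1-r = 1 from by omega, Finset.sum_range_one, if_pos (Nat.zero_le _),
    show r+1+s-1-2*r-0 = s-r from by omega, show r - r = 0 from by omega]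
  by_cases h : r ≤ s
  · rw [if_pos h]
  · rw [if_neg h, show s - r = 0 from by omega]
    exact stmt7_diag G hG 0

private lemma stmt7_rec1 (β : ℂ) (G : ℕ → ℕ → Y) (hG : ∀ a b, G b a = -G a b) (r s : ℕ) :
    stmt7S β G (r+1) s = stmt7S β G r (s+1) + stmt7E β G r s := by
  unfold stmt7S stmt7E
  rw [Finset.sum_range_succ, stmt7_top G hG r s, Finset.sum_range_succ (n := r)]
  have key : ∀ m ∈ Finset.range r, β^m • stmt7H G (r+1) s m
      = β^m • stmt7H G r (s+1) m + β^m • (if m ≤ s then G (r-m) (s-m) else 0) := by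
    intro m hm
    rw [stmt7_step G s (Finset.mem_range.mp hm), smul_add]
  rw [Finset.sum_congr rfl key, Finset.sum_add_distrib]
  abel

private lemma stmt7_S_zero (β : ℂ) (G : ℕ → ℕ → Y) (hG : ∀ a b, G b a = -G a b) (q : ℕ) :
    stmt7S β G q 0 = 0 := by
  unfold stmt7S
  apply Finset.sum_eq_zero
  intro m hm
  have hm' : m < q := Finset.mem_range.mp hm
  have hz : stmt7H G q 0 m = 0 := by
    unfold stmt7H
    calc ∑ a ∈ Finset.range (q-m), (if a ≤ q+0-1-2*m then G a (q+0-1-2*m-a) else 0)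
        = ∑ a ∈ Finset.range (q+0-1-2*m+1), (if a ≤ q+0-1-2*m then G a (q+0-1-2*m-a) else 0) := by
          refine (Finset.sum_subset (Finset.range_subset_range.mpr (by omega)) ?_).symm
          intro x hx hnx
          rw [Finset.mem_range] at hx
          rw [Finset.mem_range] at hnx
          rw [if_neg (by omega)]
      _ = ∑ a ∈ Finset.range (q+0-1-2*m+1), G a (q+0-1-2*m-a) := by
          apply Finset.sum_congr rfl
          intro a ha
          rw [Finset.mem_range] at ha
          rw [if_pos (by omega)]
      _ = 0 := stmt7_antidiag_zero G hG _
  rw [hz, smul_zero]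

private lemma stmt7_E_eq (β : ℂ) (G : ℕ → ℕ → Y) (hG : ∀ a b, G b a = -G a b) (r s : ℕ) :
    stmt7E β G r s = (if s = 0 then (0:ℂ) else β) • stmt7S β G r (s-1)
      - (if r = 0 then (0:ℂ) else β) • stmt7S β G (r-1) s + G r s := by
  match s with
  | 0 =>
    rw [if_pos rfl, zero_smul, stmt7_S_zero β G hG, smul_zero]
    unfold stmt7E
    rw [Finset.sum_eq_single_of_mem 0 (Finset.mem_range.mpr (by omega))]
    · simp
    · intro b hb hb0
      rw [if_neg (by omega), smul_zero]
  | (s+1) =>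
    rw [if_neg (by omega)]
    match r with
    | 0 =>
      rw [if_pos rfl, zero_smul]
      have h0 : ∀ u, stmt7S β G 0 u = 0 := by
        intro u; unfold stmt7S; rw [Finset.range_zero, Finset.sum_empty]
      simp only [h0, smul_zero]
      unfold stmt7E
      rw [Finset.sum_range_one]
      simp
    | (r+1) =>
      rw [if_neg (by omega), show r+1-1 = r from by omega, show s+1-1 = s from by omega]
      rw [stmt7_rec1 β G hG r s, smul_add]
      have hE : stmt7E β G (r+1) (s+1) = β • stmt7E β G r s + G (r+1) (s+1) := by
        unfold stmt7E
        rw [Finset.sum_range_succ' _ (r+1)]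
        congr 1
        · rw [Finset.smul_sum]
          apply Finset.sum_congr rfl
          intro m hm
          rw [show β^(m+1) = β * β^m from by rw [pow_succ]; ring, mul_smul]
          simp only [Nat.add_sub_add_right, Nat.add_le_add_iff_right]
        · simp
      rw [hE]
      abel

private lemma stmt7_rec (β : ℂ) (G : ℕ → ℕ → Y) (hG : ∀ a b, G b a = -G a b) (r s : ℕ) :
    stmt7S β G (r+1) s
      = stmt7S β G r (s+1) + (if s = 0 then (0:ℂ) else β) • stmt7S β G r (s-1)
        - (if r = 0 then (0:ℂ) else β) • stmt7S β G (r-1) s + G r s := by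
  rw [stmt7_rec1 β G hG r s, stmt7_E_eq β G hG r s]
  abel

end Stmt7Aux


/-- In `OY_β(gl_n)` (the case `a_r = 0`, `b_r = β ≠ 0` for `r ≥ 1`,
`b_0 = 0`), the defining relations imply the closed commutation formula
`[t̃^{(r)}_{ij}, t̃^{(s)}_{kl}] = Σ_{p,m≥0, m−s ≤ p ≤ r−m−1} β^m
  (t̃^{(r−p−m−1)}_{kj} t̃^{(p+s−m)}_{il} − t̃^{(p+s−m)}_{kj} t̃^{(r−p−m−1)}_{il})`. -/
theorem stmt_7 {Y : Type*} [Ring Y] [Algebra ℂ Y] {n : ℕ} (β : ℂ) (hβ : β ≠ 0)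
    (t : ℕ → Fin n → Fin n → Y)
    (ht0 : ∀ i j, t 0 i j = if i = j then 1 else 0)
    (hrel : ∀ (r s : ℕ) (i j k l : Fin n),
      ((t (r + 1) i j + (if r = 0 then (0 : ℂ) else β) • t (r - 1) i j) * t s k l
          - t s k l * (t (r + 1) i j + (if r = 0 then (0 : ℂ) else β) • t (r - 1) i j))
        - (t r i j * (t (s + 1) k l + (if s = 0 then (0 : ℂ) else β) • t (s - 1) k l)
          - (t (s + 1) k l + (if s = 0 then (0 : ℂ) else β) • t (s - 1) k l) * t r i j)
        = t r k j * t s i l - t s k j * t r i l)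
    (r s : ℕ) (i j k l : Fin n) :
    t r i j * t s k l - t s k l * t r i j
      = ∑ m ∈ Finset.range r, ∑ p ∈ Finset.Icc (m - s) (r - m - 1),
          β ^ m • (t (r - p - m - 1) k j * t (p + s - m) i l
                    - t (p + s - m) k j * t (r - p - m - 1) i l) := by
  have hG : ∀ a b : ℕ,
      (t b k j * t a i l - t a k j * t b i l)
        = -(t a k j * t b i l - t b k j * t a i l) := by
    intro a b; abel
  set G : ℕ → ℕ → Y := fun a b => t a k j * t b i l - t b k j * t a i l with hGdef
  have hGskew : ∀ a b, G b a = -G a b := hG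
  have hsum : ∀ r s : ℕ,
      (∑ m ∈ Finset.range r, ∑ p ∈ Finset.Icc (m - s) (r - m - 1),
          β ^ m • (t (r - p - m - 1) k j * t (p + s - m) i l
                    - t (p + s - m) k j * t (r - p - m - 1) i l))
        = stmt7S β G r s := by
    intro r s
    unfold stmt7S
    apply Finset.sum_congr rfl
    intro m hm
    calc (∑ p ∈ Finset.Icc (m - s) (r - m - 1),
          β ^ m • (t (r - p - m - 1) k j * t (p + s - m) i l
                    - t (p + s - m) k j * t (r - p - m - 1) i l))
        = β ^ m • ∑ p ∈ Finset.Icc (m - s) (r - m - 1), G (r - p - m - 1) (p + s - m) := by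
          rw [Finset.smul_sum]
      _ = β ^ m • stmt7H G r s m := by
          rw [stmt7_inner G hGskew s (Finset.mem_range.mp hm)]
  rw [hsum r s]
  clear hsum
  induction r using Nat.strong_induction_on generalizing s with
  | _ r IH =>
    match r with
    | 0 =>
      have hz : t 0 i j * t s k l - t s k l * t 0 i j = 0 := by
        rw [ht0]; by_cases h : i = j <;> simp [h]
      rw [hz]
      unfold stmt7S
      rw [Finset.range_zero, Finset.sum_empty]
    | (r+1) =>
      have h := hrel r s i j k l
      have hcomm : t (r+1) i j * t s k l - t s k l * t (r+1) i j
          = (t r i j * t (s+1) k l - t (s+1) k l * t r i j)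
            + (if s = 0 then (0:ℂ) else β) • (t r i j * t (s-1) k l - t (s-1) k l * t r i j)
            - (if r = 0 then (0:ℂ) else β) • (t (r-1) i j * t s k l - t s k l * t (r-1) i j)
            + (t r k j * t s i l - t s k j * t r i l) := by
        rw [← h]
        simp only [add_mul, mul_add, smul_mul_assoc, mul_smul_comm, smul_sub]
        abel
      rw [hcomm, IH r (by omega) (s+1), IH r (by omega) (s-1), IH (r-1) (by omega) s,
        stmt7_rec β G hGskew r s]
end

section
/- For each c ∈ ℂ and β ∈ ℂ, there exists a unique formal Laurent-type series φ_c(u) = u + c + Σ_{k≥1} c_k u^{-k} ∈ u + c + u^{-1}ℂ[[u^{-1}]] satisfying φ_c(u) + β/φ_c(u) = u + β/u + c (as an identity of formal series in u^{-1} after multiplying through by φ_c(u)·u). Moreover the family satisfies the group law φ_{c+d} = φ_c ∘ φ_d for all c, d ∈ ℂ. -/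
/-- The series `φ` is of the form `u + c + Σ_{k≥1} c_k u^{-k}` and satisfies
`φ + β/φ = u + β/u + c` (multiplied through by `φ`).  Here Laurent series in
`u^{-1}` are modelled as `LaurentSeries ℂ = HahnSeries ℤ ℂ` in the variable
`T = u^{-1}`, so that `u = single (-1) 1` and `β/u = single 1 β`. -/
def IsPhi (β c : ℂ) (φ : LaurentSeries ℂ) : Prop :=
  φ.coeff (-1) = 1 ∧ φ.coeff 0 = c ∧ (∀ n : ℤ, n < -1 → φ.coeff n = 0) ∧
    φ * φ + HahnSeries.C β
      = (HahnSeries.single (-1 : ℤ) (1 : ℂ) + HahnSeries.single (1 : ℤ) β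
          + HahnSeries.C c) * φ

/-- Composition `f ∘ g` for series `f = u + f_0 + Σ_{k≥1} f_k u^{-k}`:
`(f ∘ g) = g + f_0 + Σ_{k≥1} f_k g^{-k}`.  Since `g^{-k}` has order `≥ k`
(for `g` of the relevant shape), the coefficient of `T^n` is the finite sum
`Σ_{k=1}^n f_k · (g^{-1})^k.coeff n`. -/
noncomputable def phiComp (f g : LaurentSeries ℂ) : LaurentSeries ℂ :=
  g + HahnSeries.C (f.coeff 0)
    + HahnSeries.ofPowerSeries ℤ ℂ
        (PowerSeries.mk fun n : ℕ =>
          ∑ k ∈ Finset.Icc 1 n, f.coeff (k : ℤ) * ((g⁻¹) ^ k).coeff (n : ℤ))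

section Aux
open PowerSeries Finset

noncomputable section

/-- recursively defined coefficients of the power series `g` -/
def aCoeff (β c : ℂ) : ℕ → ℂ
  | 0 => 1
  | 1 => c
  | n+2 => c * aCoeff β c (n+1) + β * aCoeff β c n - (if n = 0 then β else 0)
      - ∑ i ∈ (Finset.Icc 1 (n+1)).attach, aCoeff β c i.1 * aCoeff β c (n+2-i.1)
  termination_by n => n
  decreasing_by
  · omega
  · omega
  · have := Finset.mem_Icc.mp i.2; omega
  · have := Finset.mem_Icc.mp i.2; omega

/-- the defining quadratic relation for `g` -/
def PSrel (β c : ℂ) (g : PowerSeries ℂ) : Prop :=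
  g * g + PowerSeries.C β * PowerSeries.X ^ 2
    = (1 + PowerSeries.C c * PowerSeries.X + PowerSeries.C β * PowerSeries.X ^ 2) * g

lemma sum_split (f : ℕ → ℂ) (n : ℕ) :
    ∑ i ∈ Finset.range (n+3), f i
      = f 0 + (∑ i ∈ Finset.Icc 1 (n+1), f i) + f (n+2) := by
  rw [Finset.sum_range_succ, Finset.sum_range_succ']
  have : ∑ i ∈ Finset.range (n+1), f (i+1) = ∑ i ∈ Finset.Icc 1 (n+1), f i := by
    rw [← Finset.Ico_add_one_right_eq_Icc, Finset.sum_Ico_eq_sum_range]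
    simp [add_comm]
  rw [this]; ring

lemma coeff_sq (g : PowerSeries ℂ) (n : ℕ) :
    (PowerSeries.coeff n) (g * g)
      = ∑ i ∈ Finset.range (n+1), (coeff i g) * (coeff (n-i) g) := by
  rw [PowerSeries.coeff_mul, Finset.Nat.sum_antidiagonal_eq_sum_range_succ_mk]

end

noncomputable section
variable (β c : ℂ)

lemma coeffL (g : PowerSeries ℂ) (h0 : coeff 0 g = 1) (n : ℕ) :
    (coeff (n+2)) (g * g + PowerSeries.C β * PowerSeries.X ^ 2)
      = 2 * coeff (n+2) g
        + (∑ i ∈ Finset.Icc 1 (n+1), coeff i g * coeff (n+2-i) g)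
        + (if n = 0 then β else 0) := by
  rw [map_add, coeff_sq, sum_split (fun i => coeff i g * coeff (n+2-i) g) n]
  simp only [h0, Nat.sub_zero, Nat.sub_self, PowerSeries.coeff_C_mul,
    PowerSeries.coeff_X_pow]
  have hif : (if n + 2 = 2 then (1:ℂ) else 0) = if n = 0 then 1 else 0 := by simp
  rw [hif]
  split <;> ring

lemma coeffR (g : PowerSeries ℂ) (n : ℕ) :
    (coeff (n+2)) ((1 + PowerSeries.C c * PowerSeries.X
        + PowerSeries.C β * PowerSeries.X ^ 2) * g)
      = coeff (n+2) g + c * coeff (n+1) g + β * coeff n g := by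
  have : (1 + PowerSeries.C c * PowerSeries.X + PowerSeries.C β * PowerSeries.X ^ 2) * g
      = g + PowerSeries.C c * (PowerSeries.X * g)
          + PowerSeries.C β * (PowerSeries.X * (PowerSeries.X * g)) := by ring
  rw [this]
  simp [PowerSeries.coeff_succ_X_mul, pow_two, mul_assoc]

lemma PSrel_iff (g : PowerSeries ℂ) (h0 : coeff 0 g = 1) (h1 : coeff 1 g = c) :
    PSrel β c g ↔ ∀ n : ℕ, coeff (n+2) g
      = c * coeff (n+1) g + β * coeff n g - (if n = 0 then β else 0)
        - ∑ i ∈ Finset.Icc 1 (n+1), coeff i g * coeff (n+2-i) g := by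
  constructor
  · intro hrel n
    have h := congrArg (coeff (n+2)) hrel
    rw [coeffL β g h0 n, coeffR β c g n] at h
    linear_combination h
  · intro hrec
    unfold PSrel
    ext m
    match m with
    | 0 =>
      have h0' : constantCoeff g = 1 := by
        rw [← PowerSeries.coeff_zero_eq_constantCoeff]; exact h0
      simp [PowerSeries.coeff_zero_eq_constantCoeff, map_mul, map_add, h0']
    | 1 =>
      have hmul : (1 + PowerSeries.C c * PowerSeries.X
          + PowerSeries.C β * PowerSeries.X ^ 2) * g
          = g + PowerSeries.C c * (PowerSeries.X * g)
            + PowerSeries.C β * (PowerSeries.X * (PowerSeries.X * g)) := by ring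
      rw [map_add, hmul, coeff_sq]
      simp only [Finset.sum_range_succ, Finset.sum_range_zero]
      norm_num [PowerSeries.coeff_succ_X_mul, h0, h1, pow_two]
    | (n+2) =>
      rw [coeffL β g h0 n, coeffR β c g n]
      linear_combination hrec n
end

noncomputable section
variable (β c : ℂ)

lemma aCoeff_rec (n : ℕ) : aCoeff β c (n+2)
    = c * aCoeff β c (n+1) + β * aCoeff β c n - (if n = 0 then β else 0)
      - ∑ i ∈ Finset.Icc 1 (n+1), aCoeff β c i * aCoeff β c (n+2-i) := by
  rw [aCoeff, Finset.sum_attach (Finset.Icc 1 (n+1))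
    (fun i => aCoeff β c i * aCoeff β c (n+2-i))]

lemma exists_PSrel : ∃ g : PowerSeries ℂ,
    coeff 0 g = 1 ∧ coeff 1 g = c ∧ PSrel β c g := by
  refine ⟨PowerSeries.mk (aCoeff β c), by simp [aCoeff], by simp [aCoeff], ?_⟩
  rw [PSrel_iff β c _ (by simp [aCoeff]) (by simp [aCoeff])]
  intro n
  simp only [PowerSeries.coeff_mk]
  exact aCoeff_rec β c n

lemma uniq_PSrel {g g' : PowerSeries ℂ}
    (hg0 : coeff 0 g = 1) (hg1 : coeff 1 g = c) (hg : PSrel β c g)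
    (hg0' : coeff 0 g' = 1) (hg1' : coeff 1 g' = c) (hg' : PSrel β c g') :
    g = g' := by
  have Hg := (PSrel_iff β c g hg0 hg1).mp hg
  have Hg' := (PSrel_iff β c g' hg0' hg1').mp hg'
  ext n
  induction n using Nat.strong_induction_on with
  | _ n ih =>
    match n with
    | 0 => rw [hg0, hg0']
    | 1 => rw [hg1, hg1']
    | (n+2) =>
      rw [Hg n, Hg' n, ih (n+1) (by omega), ih n (by omega)]
      congr 1
      apply Finset.sum_congr rfl
      intro i hi
      have hi' := Finset.mem_Icc.mp hi
      rw [ih i (by omega), ih (n+2-i) (by omega)]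
end

noncomputable section

def Us : LaurentSeries ℂ := HahnSeries.single (-1 : ℤ) 1
def Vs : LaurentSeries ℂ := HahnSeries.single (1 : ℤ) 1

lemma UV : Us * Vs = 1 := by
  rw [Us, Vs, HahnSeries.single_mul_single]
  norm_num [HahnSeries.single_zero_one]

lemma U_mul_coeff (x : LaurentSeries ℂ) (n : ℤ) : (Us * x).coeff n = x.coeff (n+1) := by
  have := HahnSeries.coeff_single_mul_add (r := (1:ℂ)) (x := x) (a := n+1) (b := (-1:ℤ))
  simpa [Us] using this

lemma single_one_beta (β : ℂ) : HahnSeries.single (1 : ℤ) β = HahnSeries.C β * Vs := by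
  rw [Vs, HahnSeries.C_apply, HahnSeries.single_mul_single]
  norm_num

lemma ofPS_coeff_neg (g : PowerSeries ℂ) {m : ℤ} (hm : m < 0) :
    (HahnSeries.ofPowerSeries ℤ ℂ g).coeff m = 0 := by
  rw [HahnSeries.ofPowerSeries_apply]
  refine HahnSeries.embDomain_notin_range ?_
  rintro ⟨n, h⟩
  change ((n:ℤ)) = m at h
  omega

lemma ofPS_X' : HahnSeries.ofPowerSeries ℤ ℂ PowerSeries.X = Vs := by
  rw [Vs]; exact HahnSeries.ofPowerSeries_X

lemma mappedRel {β c : ℂ} {g : PowerSeries ℂ} (h : PSrel β c g) :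
    (HahnSeries.ofPowerSeries ℤ ℂ g) * (HahnSeries.ofPowerSeries ℤ ℂ g)
        + HahnSeries.C β * Vs ^ 2
      = (1 + HahnSeries.C c * Vs + HahnSeries.C β * Vs ^ 2)
          * HahnSeries.ofPowerSeries ℤ ℂ g := by
  have := congrArg (HahnSeries.ofPowerSeries ℤ ℂ) h
  simpa only [map_add, map_mul, map_pow, map_one, HahnSeries.ofPowerSeries_C,
    ofPS_X'] using this

lemma isPhi_of (β c : ℂ) (g : PowerSeries ℂ) (h0 : coeff 0 g = 1)
    (h1 : coeff 1 g = c) (hrel : PSrel β c g) :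
    IsPhi β c (Us * HahnSeries.ofPowerSeries ℤ ℂ g) := by
  have hm := mappedRel hrel
  have huv := UV
  set h : LaurentSeries ℂ := HahnSeries.ofPowerSeries ℤ ℂ g with hh
  refine ⟨?_, ?_, ?_, ?_⟩
  · rw [U_mul_coeff]
    have e : (-1 + 1 : ℤ) = ((0:ℕ):ℤ) := by norm_num
    rw [e, hh, HahnSeries.ofPowerSeries_apply_coeff, h0]
  · rw [U_mul_coeff]
    have e : (0 + 1 : ℤ) = ((1:ℕ):ℤ) := by norm_num
    rw [e, hh, HahnSeries.ofPowerSeries_apply_coeff, h1]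
  · intro n hn
    rw [U_mul_coeff]
    exact ofPS_coeff_neg g (by omega)
  · show Us * h * (Us * h) + HahnSeries.C β
      = (Us + HahnSeries.single (1:ℤ) β + HahnSeries.C c) * (Us * h)
    rw [single_one_beta]
    linear_combination Us^2 * hm + (HahnSeries.C β * Vs * Us * h
      + HahnSeries.C c * Us * h - HahnSeries.C β * (1 + Us * Vs)) * huv
end

noncomputable section

/-- the power series extracted from a Laurent series of the right shape -/
def gOf (φ : LaurentSeries ℂ) : PowerSeries ℂ :=
  PowerSeries.mk fun n => φ.coeff ((n : ℤ) - 1)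

lemma isPhi_decomp {β c : ℂ} {φ : LaurentSeries ℂ} (h : IsPhi β c φ) :
    φ = Us * HahnSeries.ofPowerSeries ℤ ℂ (gOf φ) := by
  obtain ⟨h1, h0, hneg, heq⟩ := h
  apply HahnSeries.coeff_injective
  funext m
  show φ.coeff m = _
  rw [U_mul_coeff]
  rcases le_or_gt (-1) m with hm | hm
  · have hk : (((m+1).toNat : ℤ)) = m + 1 := Int.toNat_of_nonneg (by omega)
    rw [← hk, HahnSeries.ofPowerSeries_apply_coeff, gOf, PowerSeries.coeff_mk]
    congr 1
    omega
  · rw [ofPS_coeff_neg _ (by omega), hneg m hm]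

lemma isPhi_gOf {β c : ℂ} {φ : LaurentSeries ℂ} (h : IsPhi β c φ) :
    coeff 0 (gOf φ) = 1 ∧ coeff 1 (gOf φ) = c ∧ PSrel β c (gOf φ) := by
  obtain ⟨h1, h0, hneg, heq⟩ := h
  refine ⟨?_, ?_, ?_⟩
  · rw [gOf, PowerSeries.coeff_mk]; norm_num [h1]
  · rw [gOf, PowerSeries.coeff_mk]; norm_num [h0]
  · -- recover the power series relation
    have hd := isPhi_decomp ⟨h1, h0, hneg, heq⟩
    set h' : LaurentSeries ℂ := HahnSeries.ofPowerSeries ℤ ℂ (gOf φ) with hh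
    rw [hd, single_one_beta, show HahnSeries.single (-1:ℤ) (1:ℂ) = Us from rfl] at heq
    have huv := UV
    have hmap : (HahnSeries.ofPowerSeries ℤ ℂ) ((gOf φ) * (gOf φ)
          + PowerSeries.C β * PowerSeries.X ^ 2)
        = (HahnSeries.ofPowerSeries ℤ ℂ) ((1 + PowerSeries.C c * PowerSeries.X
          + PowerSeries.C β * PowerSeries.X ^ 2) * (gOf φ)) := by
      simp only [map_add, map_mul, map_pow, map_one, HahnSeries.ofPowerSeries_C, ofPS_X']
      rw [← hh]
      linear_combination Vs^2 * heq
        + ((Us * Vs + 1) * (h' - h' * h') + h' * HahnSeries.C β * Vs^2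
            + h' * HahnSeries.C c * Vs) * huv
    exact HahnSeries.ofPowerSeries_injective hmap
end


noncomputable section

variable {y : LaurentSeries ℂ} (hy : 0 < y.orderTop)

/-- The summable family `n ↦ G_n • y^n`. -/
def evalFam (G : PowerSeries ℂ) (y : LaurentSeries ℂ) (hy : 0 < y.orderTop) :
    HahnSeries.SummableFamily ℤ ℂ ℕ where
  toFun n := (coeff n G) • y ^ n
  isPWO_iUnion_support' := by
    refine (HahnSeries.SummableFamily.isPWO_iUnion_support_powers (HahnSeries.zero_le_orderTop_iff.mp (le_of_lt hy))).mono ?_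
    refine Set.iUnion_mono fun n => ?_
    intro g hg
    rw [HahnSeries.mem_support, HahnSeries.coeff_smul] at hg
    rw [HahnSeries.mem_support]
    exact fun h => hg (by rw [h, smul_zero])
  finite_co_support' g := by
    refine ((HahnSeries.SummableFamily.powers y).finite_co_support g).subset ?_
    intro n hn
    have hn' : (coeff n G • y ^ n).coeff g ≠ 0 := hn
    rw [HahnSeries.coeff_smul] at hn'
    show ((HahnSeries.SummableFamily.powers y) n).coeff g ≠ 0
    have hpow : (HahnSeries.SummableFamily.powers y) n = y ^ n :=
        HahnSeries.SummableFamily.powers_of_orderTop_pos hy n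
    rw [hpow]
    exact fun h => hn' (by rw [h, smul_zero])

/-- Evaluation of a power series at a Laurent series of positive order. -/
def Eval (G : PowerSeries ℂ) (y : LaurentSeries ℂ) (hy : 0 < y.orderTop) : LaurentSeries ℂ :=
  (evalFam G y hy).hsum

lemma evalFam_apply (G : PowerSeries ℂ) (n : ℕ) :
    evalFam G y hy n = (coeff n G) • y ^ n := rfl

lemma Eval_add (G H : PowerSeries ℂ) :
    Eval (G + H) y hy = Eval G y hy + Eval H y hy := by
  rw [Eval, Eval, Eval, ← HahnSeries.SummableFamily.hsum_add]
  congr 1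
  ext n : 1
  rw [HahnSeries.SummableFamily.add_apply, evalFam_apply, evalFam_apply, evalFam_apply]
  apply HahnSeries.coeff_injective
  funext g
  show _ = ((coeff n G) • y ^ n + (coeff n H) • y ^ n).coeff g
  rw [HahnSeries.coeff_smul, HahnSeries.coeff_add, HahnSeries.coeff_smul,
    HahnSeries.coeff_smul, map_add]
  simp [add_mul]

lemma Eval_C (r : ℂ) : Eval (PowerSeries.C r) y hy = HahnSeries.C r := by
  rw [Eval]
  ext g
  rw [HahnSeries.SummableFamily.coeff_hsum]
  rw [finsum_eq_single _ 0 ?side]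
  case side =>
    intro n hn
    rw [evalFam_apply]
    simp [PowerSeries.coeff_C, hn]
  rw [evalFam_apply]
  simp [HahnSeries.C_apply, HahnSeries.coeff_single, HahnSeries.coeff_one]

lemma Eval_X : Eval PowerSeries.X y hy = y := by
  rw [Eval]
  ext g
  rw [HahnSeries.SummableFamily.coeff_hsum]
  rw [finsum_eq_single _ 1 ?side]
  case side =>
    intro n hn
    rw [evalFam_apply]
    simp [PowerSeries.coeff_X, hn]
  rw [evalFam_apply]
  simp

lemma Eval_mul (G H : PowerSeries ℂ) :
    Eval (G * H) y hy = Eval G y hy * Eval H y hy := by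
  have hmul : Eval G y hy * Eval H y hy
      = (HahnSeries.SummableFamily.smul (evalFam G y hy) (evalFam H y hy)).hsum := by
    rw [HahnSeries.SummableFamily.smul_hsum]
    rw [HahnSeries.of_symm_smul_of_eq_mul]
    rfl
  rw [hmul, Eval]
  ext g
  classical
  set P : Finset ℕ := ((HahnSeries.SummableFamily.powers y).finite_co_support g).toFinset
    with hP
  have hPmem : ∀ n : ℕ, n ∈ P ↔ (y ^ n).coeff g ≠ 0 := by
    intro n
    rw [hP]
    exact (Set.Finite.mem_toFinset _).trans (by
      simp only [Function.mem_support, HahnSeries.SummableFamily.powers_of_orderTop_pos hy])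
  have hL : (evalFam (G * H) y hy).hsum.coeff g
      = ∑ n ∈ P, (coeff n (G * H)) * (y ^ n).coeff g := by
    rw [HahnSeries.SummableFamily.coeff_hsum_eq_sum_of_subset (t := P)]
    · apply Finset.sum_congr rfl
      intro n _
      rw [evalFam_apply, HahnSeries.coeff_smul, smul_eq_mul]
    · intro n hn
      rw [Set.mem_setOf_eq, evalFam_apply, HahnSeries.coeff_smul, smul_eq_mul] at hn
      rw [Finset.mem_coe, hPmem]
      exact fun h => hn (by rw [h, mul_zero])
  have hfam : ∀ p : ℕ × ℕ,
      (HahnSeries.SummableFamily.smul (evalFam G y hy) (evalFam H y hy)) p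
        = (coeff p.1 G * coeff p.2 H) • y ^ (p.1 + p.2) := by
    intro p
    show (HahnModule.of ℂ).symm ((evalFam G y hy p.1) • (HahnModule.of ℂ) (evalFam H y hy p.2))
      = _
    rw [HahnSeries.of_symm_smul_of_eq_mul, evalFam_apply, evalFam_apply,
      ← HahnSeries.C_mul_eq_smul, ← HahnSeries.C_mul_eq_smul, ← HahnSeries.C_mul_eq_smul,
      map_mul, pow_add]
    ring
  have hR : (HahnSeries.SummableFamily.smul (evalFam G y hy)
        (evalFam H y hy)).hsum.coeff g
      = ∑ p ∈ P.biUnion (fun n => Finset.HasAntidiagonal.antidiagonal n),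
          (coeff p.1 G * coeff p.2 H) * (y ^ (p.1 + p.2)).coeff g := by
    rw [HahnSeries.SummableFamily.coeff_hsum_eq_sum_of_subset
      (t := P.biUnion (fun n => Finset.HasAntidiagonal.antidiagonal n))]
    · apply Finset.sum_congr rfl
      intro p _
      rw [hfam, HahnSeries.coeff_smul, smul_eq_mul]
    · intro p hp
      rw [Set.mem_setOf_eq, hfam, HahnSeries.coeff_smul, smul_eq_mul] at hp
      rw [Finset.mem_coe, Finset.mem_biUnion]
      refine ⟨p.1 + p.2, ?_, ?_⟩
      · rw [hPmem]
        exact fun h => hp (by rw [h, mul_zero])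
      · simp [Finset.HasAntidiagonal.mem_antidiagonal]
  rw [hL, hR, Finset.sum_biUnion]
  · apply Finset.sum_congr rfl
    intro n _
    rw [PowerSeries.coeff_mul, Finset.sum_mul]
    apply Finset.sum_congr rfl
    intro p hp
    rw [Finset.HasAntidiagonal.mem_antidiagonal] at hp
    rw [hp]
  · -- pairwise disjoint antidiagonals
    intro a _ b _ hab
    apply Finset.disjoint_left.mpr
    intro p hpa hpb
    rw [Finset.HasAntidiagonal.mem_antidiagonal] at hpa hpb
    exact hab (hpa ▸ hpb)

lemma Eval_one : Eval 1 y hy = 1 := by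
  have := Eval_C (y := y) (hy := hy) 1
  rwa [map_one, map_one] at this

end

noncomputable section
open HahnSeries

lemma exists_unique_phi (β c : ℂ) : ∃! φ : LaurentSeries ℂ, IsPhi β c φ := by
  obtain ⟨g, h0, h1, hrel⟩ := exists_PSrel β c
  refine ⟨Us * HahnSeries.ofPowerSeries ℤ ℂ g, isPhi_of β c g h0 h1 hrel, ?_⟩
  intro ψ hψ
  obtain ⟨k0, k1, krel⟩ := isPhi_gOf hψ
  rw [isPhi_decomp hψ, uniq_PSrel β c k0 k1 krel h0 h1 hrel]

section Group

variable {β c d : ℂ} {φc φd : LaurentSeries ℂ}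

lemma phid_ne (h : IsPhi β d φd) : φd ≠ 0 :=
  HahnSeries.ne_zero_of_coeff_ne_zero (h.1.trans_ne one_ne_zero)

lemma phid_order (h : IsPhi β d φd) : φd.order = -1 := by
  have h1 : φd.order ≤ -1 :=
    HahnSeries.order_le_of_coeff_ne_zero (h.1.trans_ne one_ne_zero)
  rcases lt_or_eq_of_le h1 with hlt | he
  · exact absurd (h.2.2.1 _ hlt) (mt HahnSeries.coeff_order_eq_zero.mp (phid_ne h))
  · exact he

lemma phid_inv_ne (h : IsPhi β d φd) : φd⁻¹ ≠ 0 := inv_ne_zero (phid_ne h)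

lemma phid_inv_order (h : IsPhi β d φd) : (φd⁻¹).order = 1 := by
  have hmul : φd * φd⁻¹ = 1 := mul_inv_cancel₀ (phid_ne h)
  have := HahnSeries.order_mul (phid_ne h) (phid_inv_ne h)
  rw [hmul, HahnSeries.order_one, phid_order h] at this
  omega

lemma phid_inv_orderTop (h : IsPhi β d φd) : 0 < (φd⁻¹).orderTop := by
  apply HahnSeries.zero_lt_orderTop_of_order
  rw [phid_inv_order h]
  norm_num

lemma le_orderTop_pow {y : LaurentSeries ℂ} (hy : (1 : WithTop ℤ) ≤ y.orderTop) (k : ℕ) :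
    ((k : ℤ) : WithTop ℤ) ≤ (y ^ k).orderTop := by
  induction k with
  | zero => simp [HahnSeries.orderTop_one]
  | succ n ih =>
    have hmul := HahnSeries.orderTop_add_le_mul (x := y ^ n) (y := y)
    rw [pow_succ]
    refine le_trans ?_ hmul
    push_cast
    exact add_le_add ih hy

end Group
end

noncomputable section
open HahnSeries

lemma Eval_sub {y : LaurentSeries ℂ} (hy : 0 < y.orderTop) (G H : PowerSeries ℂ) :
    Eval (G - H) y hy = Eval G y hy - Eval H y hy := by
  have h := Eval_add (hy := hy) (G - H) H
  rw [sub_add_cancel] at h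
  rw [h]; ring

/-- the "tail" power series of `φc` -/
def Fser (φ : LaurentSeries ℂ) : PowerSeries ℂ :=
  PowerSeries.mk fun k => if k = 0 then 0 else φ.coeff (k : ℤ)

section Group2

variable {β c d : ℂ} {φc φd : LaurentSeries ℂ}

lemma gOf_dec (h : IsPhi β c φc) :
    gOf φc = 1 + PowerSeries.C c * PowerSeries.X + PowerSeries.X * Fser φc := by
  ext n
  match n with
  | 0 =>
    simp [gOf, Fser, PowerSeries.coeff_mk, h.1]
  | (n+1) =>
    simp only [gOf, Fser, PowerSeries.coeff_mk, map_add, PowerSeries.coeff_one,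
      PowerSeries.coeff_C_mul, PowerSeries.coeff_X, PowerSeries.coeff_succ_X_mul]
    match n with
    | 0 => simpa using h.2.1
    | (m+1) =>
      push_cast
      norm_num

lemma hps (h : IsPhi β c φc) :
    gOf φc * (PowerSeries.C β * PowerSeries.X - Fser φc)
      = PowerSeries.C β * PowerSeries.X := by
  obtain ⟨h0, h1, hrel⟩ := isPhi_gOf h
  have hrel' : gOf φc * gOf φc + PowerSeries.C β * PowerSeries.X ^ 2
      = (1 + PowerSeries.C c * PowerSeries.X
          + PowerSeries.C β * PowerSeries.X ^ 2) * gOf φc := hrel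
  have hdec := gOf_dec h
  apply mul_left_cancel₀ (PowerSeries.X_ne_zero (R := ℂ))
  linear_combination (gOf φc) * hdec - hrel'

lemma Eval_F_eq (hc : IsPhi β c φc) (hd : IsPhi β d φd) :
    HahnSeries.ofPowerSeries ℤ ℂ
        (PowerSeries.mk fun n : ℕ =>
          ∑ k ∈ Finset.Icc 1 n, φc.coeff (k : ℤ) * ((φd⁻¹) ^ k).coeff (n : ℤ))
      = Eval (Fser φc) φd⁻¹ (phid_inv_orderTop hd) := by
  set y := φd⁻¹ with hy'
  have hy1 : ((1:ℤ) : WithTop ℤ) ≤ y.orderTop := by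
    rw [← HahnSeries.order_eq_orderTop_of_ne_zero (phid_inv_ne hd), phid_inv_order hd]
  have hvanish : ∀ (k : ℕ) (m : ℤ), m < (k : ℤ) → (y ^ k).coeff m = 0 := by
    intro k m hmk
    apply HahnSeries.coeff_eq_zero_of_lt_orderTop
    refine lt_of_lt_of_le ?_ (le_orderTop_pow hy1 k)
    exact_mod_cast hmk
  apply HahnSeries.coeff_injective
  funext m
  rcases lt_or_ge m 0 with hm | hm
  · rw [ofPS_coeff_neg _ hm]
    show _ = (Eval (Fser φc) y (phid_inv_orderTop hd)).coeff m
    rw [Eval, HahnSeries.SummableFamily.coeff_hsum]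
    symm
    apply finsum_eq_zero_of_forall_eq_zero
    intro k
    rw [evalFam_apply, HahnSeries.coeff_smul]
    rcases Nat.eq_zero_or_pos k with hk | hk
    · subst hk; simp [Fser, PowerSeries.coeff_mk]
    · rw [hvanish k m (by omega), smul_zero]
  · obtain ⟨n, rfl⟩ := Int.eq_ofNat_of_zero_le hm
    rw [HahnSeries.ofPowerSeries_apply_coeff, PowerSeries.coeff_mk]
    show _ = (Eval (Fser φc) y (phid_inv_orderTop hd)).coeff (n : ℤ)
    rw [Eval, HahnSeries.SummableFamily.coeff_hsum_eq_sum_of_subset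
      (t := Finset.Icc 1 n)]
    · symm
      apply Finset.sum_congr rfl
      intro k hk
      have hk' := Finset.mem_Icc.mp hk
      rw [evalFam_apply, HahnSeries.coeff_smul, smul_eq_mul, Fser, PowerSeries.coeff_mk]
      rw [if_neg (by omega)]
    · intro k hk
      rw [Set.mem_setOf_eq, evalFam_apply, HahnSeries.coeff_smul] at hk
      rw [Finset.mem_coe, Finset.mem_Icc]
      constructor
      · by_contra hk0
        apply hk
        have : k = 0 := by omega
        subst this
        simp [Fser, PowerSeries.coeff_mk]
      · by_contra hkn
        exact hk (by rw [hvanish k n (by omega), smul_zero])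

lemma psi_def (hc : IsPhi β c φc) (hd : IsPhi β d φd) :
    phiComp φc φd = φd + HahnSeries.C c + Eval (Fser φc) φd⁻¹ (phid_inv_orderTop hd) := by
  rw [phiComp, hc.2.1, Eval_F_eq hc hd]

lemma Eval_gc (hc : IsPhi β c φc) (hd : IsPhi β d φd) :
    Eval (gOf φc) φd⁻¹ (phid_inv_orderTop hd)
      = 1 + HahnSeries.C c * φd⁻¹
          + φd⁻¹ * Eval (Fser φc) φd⁻¹ (phid_inv_orderTop hd) := by
  conv_lhs => rw [gOf_dec hc]
  rw [Eval_add, Eval_add, Eval_one, Eval_mul, Eval_mul, Eval_C, Eval_X]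

lemma isPhi_comp (hc : IsPhi β c φc) (hd : IsPhi β d φd) :
    IsPhi β (c + d) (phiComp φc φd) := by
  have hy := phid_inv_orderTop hd
  set y := φd⁻¹ with hy'
  set S := Eval (Fser φc) y hy with hS
  set g := Eval (gOf φc) y hy with hg
  have E1 : phiComp φc φd = φd + HahnSeries.C c + S := psi_def hc hd
  have hgdec : g = 1 + HahnSeries.C c * y + y * S := Eval_gc hc hd
  have E4 : φd * y = 1 := mul_inv_cancel₀ (phid_ne hd)
  have E2 : phiComp φc φd = φd * g := by
    linear_combination E1 - φd * hgdec - (HahnSeries.C c + S) * E4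
  have E3 : g * (HahnSeries.C β * y - S) = HahnSeries.C β * y := by
    have h := congrArg (fun G => Eval G y hy) (hps hc)
    simp only [Eval_mul, Eval_sub, Eval_C, Eval_X] at h
    exact h
  have E5 : φd * φd + HahnSeries.C β
      = (Us + HahnSeries.single (1 : ℤ) β + HahnSeries.C d) * φd := hd.2.2.2
  have h6 : phiComp φc φd * (HahnSeries.C β * y - S) = HahnSeries.C β := by
    linear_combination (HahnSeries.C β * y - S) * E2 + φd * E3 + HahnSeries.C β * E4
  have h7 : φd + HahnSeries.C β * y
      = Us + HahnSeries.single (1 : ℤ) β + HahnSeries.C d := by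
    linear_combination y * E5
      - (φd - (Us + HahnSeries.single (1 : ℤ) β + HahnSeries.C d)) * E4
  refine ⟨?_, ?_, ?_, ?_⟩
  · rw [E1]
    rw [HahnSeries.coeff_add, HahnSeries.coeff_add, hd.1, HahnSeries.C_apply,
      HahnSeries.coeff_single_of_ne (by norm_num)]
    have hSc : S.coeff (-1) = 0 := by
      rw [hS, ← Eval_F_eq hc hd]
      exact ofPS_coeff_neg _ (by norm_num)
    rw [hSc]
    ring
  · rw [E1]
    rw [HahnSeries.coeff_add, HahnSeries.coeff_add, hd.2.1, HahnSeries.C_apply,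
      HahnSeries.coeff_single_same]
    have hSc : S.coeff 0 = 0 := by
      rw [hS, ← Eval_F_eq hc hd]
      have : ((0:ℕ) : ℤ) = (0 : ℤ) := rfl
      rw [← this, HahnSeries.ofPowerSeries_apply_coeff, PowerSeries.coeff_mk]
      simp
    rw [hSc]
    ring
  · intro n hn
    rw [E1]
    rw [HahnSeries.coeff_add, HahnSeries.coeff_add, hd.2.2.1 n hn, HahnSeries.C_apply,
      HahnSeries.coeff_single_of_ne (by omega)]
    have hSc : S.coeff n = 0 := by
      rw [hS, ← Eval_F_eq hc hd]
      exact ofPS_coeff_neg _ (by omega)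
    rw [hSc]
    ring
  · show phiComp φc φd * phiComp φc φd + HahnSeries.C β
      = (Us + HahnSeries.single (1 : ℤ) β + HahnSeries.C (c + d)) * phiComp φc φd
    rw [map_add]
    linear_combination (phiComp φc φd) * E1 - h6 + (phiComp φc φd) * h7

end Group2
end

end Aux

/-- for every `c ∈ ℂ` there is a unique formal series
`φ_c(u) = u + c + Σ_{k≥1} c_k u^{-k}` with `φ_c + β/φ_c = u + β/u + c`;
moreover the family satisfies the group law `φ_{c+d} = φ_c ∘ φ_d`. -/
theorem stmt_9 (β : ℂ) :
    (∀ c : ℂ, ∃! φ : LaurentSeries ℂ, IsPhi β c φ) ∧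
    (∀ (c d : ℂ) (φc φd φcd : LaurentSeries ℂ),
      IsPhi β c φc → IsPhi β d φd → IsPhi β (c + d) φcd →
        φcd = phiComp φc φd) := by
  refine ⟨exists_unique_phi β, ?_⟩
  intro c d φc φd φcd hc hd hcd
  exact (exists_unique_phi β (c + d)).unique hcd (isPhi_comp hc hd)
end

section
/- Let E be the matrix of matrix units over U(gl_n), q ∈ ℂ∖{0}, and define m^{(r)}_{ij} := (𝒫_r^q(E))_{ij} where 𝒫_r^q(x) = ∏_{k=0}^{r-1}(1 − x q^k). Then for all r,s ≥ 1 and indices i,j,k,l: (q^{-r} − q^{-s})[m^{(r)}_{ij}, m^{(s)}_{kl}] + q^{-s}[m^{(r)}_{ij}, m^{(s+1)}_{kl}] − q^{-r}[m^{(r+1)}_{ij}, m^{(s)}_{kl}] = m^{(r)}_{kj} m^{(s)}_{il} − m^{(s)}_{kj} m^{(r)}_{il}. -/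
open Polynomial

section Aux

variable {A : Type*} [Ring A] {n : ℕ}

private lemma sum_ite_const {α β : Type*} [AddCommMonoid β] (c : Prop) [Decidable c]
    (s : Finset α) (f : α → β) :
    ∑ m ∈ s, (if c then f m else 0) = if c then ∑ m ∈ s, f m else 0 := by
  split_ifs <;> simp

variable (E : Matrix (Fin n) (Fin n) A)
variable (hE : ∀ i j k l : Fin n,
      E i j * E k l - E k l * E i j =
        (if j = k then E i l else 0) - (if l = i then E k j else 0))

include hE

/-- `[E_{ij}, (E^b)_{kl}] = δ_{jk}(E^b)_{il} - δ_{li}(E^b)_{kj}` -/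
private lemma der : ∀ (b : ℕ) (i j k l : Fin n),
    E i j * (E ^ b) k l - (E ^ b) k l * E i j =
      (if j = k then (E ^ b) i l else 0) - (if l = i then (E ^ b) k j else 0) := by
  intro b
  induction b with
  | zero =>
    intro i j k l
    clear hE
    simp only [pow_zero, Matrix.one_apply]
    split_ifs <;> subst_vars <;> simp_all
  | succ b IH =>
    intro i j k l
    have hp : ∀ x y : Fin n, (E ^ (b + 1)) x y = ∑ m, (E ^ b) x m * E m y := by
      intro x y; rw [pow_succ, Matrix.mul_apply]
    rw [hp k l, Finset.mul_sum, Finset.sum_mul, ← Finset.sum_sub_distrib]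
    have key : ∀ m ∈ Finset.univ, E i j * ((E ^ b) k m * E m l) - (E ^ b) k m * E m l * E i j
        = (E ^ b) k m * (if j = m then E i l else 0) -
            (E ^ b) k m * (if l = i then E m j else 0)
          + ((if j = k then (E ^ b) i m else 0) * E m l -
              (if m = i then (E ^ b) k j else 0) * E m l) := by
      intro m _
      have c1 : E i j * E m l = E m l * E i j +
          ((if j = m then E i l else 0) - (if l = i then E m j else 0)) := by
        rw [← hE i j m l]; noncomm_ring
      have c2 : E i j * (E ^ b) k m = (E ^ b) k m * E i j +
          ((if j = k then (E ^ b) i m else 0) - (if m = i then (E ^ b) k j else 0)) := by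
        rw [← IH i j k m]; noncomm_ring
      calc E i j * ((E ^ b) k m * E m l) - (E ^ b) k m * E m l * E i j
          = (E i j * (E ^ b) k m) * E m l - (E ^ b) k m * (E m l * E i j) := by noncomm_ring
        _ = ((E ^ b) k m * E i j +
              ((if j = k then (E ^ b) i m else 0) - (if m = i then (E ^ b) k j else 0))) * E m l
            - (E ^ b) k m * (E i j * E m l -
              ((if j = m then E i l else 0) - (if l = i then E m j else 0))) := by
            rw [← c2]
            congr 1
            rw [c1]; noncomm_ring
        _ = _ := by noncomm_ring
    rw [Finset.sum_congr rfl key]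
    simp only [Finset.sum_add_distrib, Finset.sum_sub_distrib, mul_ite, ite_mul,
      mul_zero, zero_mul, Finset.sum_ite_eq, Finset.sum_ite_eq', Finset.mem_univ, if_true,
      sum_ite_const]
    rw [hp i l, hp k j]
    abel

/-- `[(E^{a+1})_{ij},(E^b)_{kl}] - [(E^a)_{ij},(E^{b+1})_{kl}]
  = (E^a)_{kj}(E^b)_{il} - (E^b)_{kj}(E^a)_{il}` -/
private lemma powId : ∀ (a b : ℕ) (i j k l : Fin n),
    ((E ^ (a+1)) i j * (E ^ b) k l - (E ^ b) k l * (E ^ (a+1)) i j)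
      - ((E ^ a) i j * (E ^ (b+1)) k l - (E ^ (b+1)) k l * (E ^ a) i j)
    = (E ^ a) k j * (E ^ b) i l - (E ^ b) k j * (E ^ a) i l := by
  intro a
  induction a with
  | zero =>
    intro b i j k l
    have h0 : ∀ x y : Fin n, (E ^ 0) x y = if x = y then 1 else 0 := by
      intro x y; rw [pow_zero, Matrix.one_apply]
    rw [pow_one]
    rw [der E hE b i j k l]
    simp only [h0]
    clear hE
    split_ifs <;> subst_vars <;> simp_all
  | succ a IH =>
    intro b i j k l
    have hp : ∀ (c : ℕ) (x y : Fin n), (E ^ (c + 1)) x y = ∑ m, E x m * (E ^ c) m y := by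
      intro c x y; rw [pow_succ', Matrix.mul_apply]
    have hpp : ∀ (c d : ℕ) (x y : Fin n),
        ∑ m, (E ^ c) x m * (E ^ d) m y = (E ^ (c + d)) x y := by
      intro c d x y; rw [pow_add, Matrix.mul_apply]
    rw [hp (a+1) i j, hp a i j]
    rw [Finset.sum_mul, Finset.mul_sum, Finset.sum_mul, Finset.mul_sum,
      ← Finset.sum_sub_distrib, ← Finset.sum_sub_distrib, ← Finset.sum_sub_distrib]
    have key : ∀ m ∈ Finset.univ,
        E i m * (E ^ (a+1)) m j * (E ^ b) k l - (E ^ b) k l * (E i m * (E ^ (a+1)) m j)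
          - (E i m * (E ^ a) m j * (E ^ (b+1)) k l - (E ^ (b+1)) k l * (E i m * (E ^ a) m j))
        = (E ^ a) k j * (E i m * (E ^ b) m l)
            + (if m = k then (E ^ a) i j * (E ^ b) m l else 0)
            - (if j = i then (E ^ a) k m * (E ^ b) m l else 0)
            - (E ^ b) k j * (E i m * (E ^ a) m l)
            - (if m = k then (E ^ b) i j * (E ^ a) m l else 0)
            + (if j = i then (E ^ b) k m * (E ^ a) m l else 0)
            + (if m = k then (E ^ b) i l * (E ^ (a+1)) m j else 0)
            - (if l = i then (E ^ b) k m * (E ^ (a+1)) m j else 0)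
            - (if m = k then (E ^ (b+1)) i l * (E ^ a) m j else 0)
            + (if l = i then (E ^ (b+1)) k m * (E ^ a) m j else 0) := by
      intro m _
      have c1 : E i m * (E ^ a) k j = (E ^ a) k j * E i m +
          ((if m = k then (E ^ a) i j else 0) - (if j = i then (E ^ a) k m else 0)) := by
        rw [← der E hE a i m k j]; noncomm_ring
      have c2 : E i m * (E ^ b) k j = (E ^ b) k j * E i m +
          ((if m = k then (E ^ b) i j else 0) - (if j = i then (E ^ b) k m else 0)) := by
        rw [← der E hE b i m k j]; noncomm_ring
      have e1 : E i m * (E ^ b) k l - (E ^ b) k l * E i m =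
          (if m = k then (E ^ b) i l else 0) - (if l = i then (E ^ b) k m else 0) :=
        der E hE b i m k l
      have e2 : E i m * (E ^ (b+1)) k l - (E ^ (b+1)) k l * E i m =
          (if m = k then (E ^ (b+1)) i l else 0) - (if l = i then (E ^ (b+1)) k m else 0) :=
        der E hE (b+1) i m k l
      have e3 : (E ^ (a+1)) m j * (E ^ b) k l - (E ^ b) k l * (E ^ (a+1)) m j
          - ((E ^ a) m j * (E ^ (b+1)) k l - (E ^ (b+1)) k l * (E ^ a) m j)
          = (E ^ a) k j * (E ^ b) m l - (E ^ b) k j * (E ^ a) m l := IH b m j k l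
      calc E i m * (E ^ (a+1)) m j * (E ^ b) k l - (E ^ b) k l * (E i m * (E ^ (a+1)) m j)
            - (E i m * (E ^ a) m j * (E ^ (b+1)) k l - (E ^ (b+1)) k l * (E i m * (E ^ a) m j))
          = E i m * ((E ^ (a+1)) m j * (E ^ b) k l - (E ^ b) k l * (E ^ (a+1)) m j
              - ((E ^ a) m j * (E ^ (b+1)) k l - (E ^ (b+1)) k l * (E ^ a) m j))
            + (E i m * (E ^ b) k l - (E ^ b) k l * E i m) * (E ^ (a+1)) m j
            - (E i m * (E ^ (b+1)) k l - (E ^ (b+1)) k l * E i m) * (E ^ a) m j := by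
              noncomm_ring
        _ = E i m * ((E ^ a) k j * (E ^ b) m l - (E ^ b) k j * (E ^ a) m l)
            + ((if m = k then (E ^ b) i l else 0) - (if l = i then (E ^ b) k m else 0))
                * (E ^ (a+1)) m j
            - ((if m = k then (E ^ (b+1)) i l else 0) - (if l = i then (E ^ (b+1)) k m else 0))
                * (E ^ a) m j := by rw [e3, e1, e2]
        _ = (E i m * (E ^ a) k j) * (E ^ b) m l - (E i m * (E ^ b) k j) * (E ^ a) m l
            + ((if m = k then (E ^ b) i l else 0) - (if l = i then (E ^ b) k m else 0))
                * (E ^ (a+1)) m j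
            - ((if m = k then (E ^ (b+1)) i l else 0) - (if l = i then (E ^ (b+1)) k m else 0))
                * (E ^ a) m j := by noncomm_ring
        _ = _ := by
              rw [c1, c2]
              simp only [add_mul, sub_mul, ite_mul, zero_mul]
              noncomm_ring
    rw [Finset.sum_congr rfl key]
    simp only [Finset.sum_add_distrib, Finset.sum_sub_distrib, sum_ite_const,
      Finset.sum_ite_eq', Finset.mem_univ, if_true, ← Finset.mul_sum]
    rw [show (∑ m, E i m * (E ^ b) m l) = (E ^ (b+1)) i l from (hp b i l).symm,
      show (∑ m, E i m * (E ^ a) m l) = (E ^ (a+1)) i l from (hp a i l).symm,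
      hpp a b k l, hpp b a k l, hpp b (a+1) k j, hpp (b+1) a k j,
      show b + a = a + b from Nat.add_comm b a,
      show b + 1 + a = b + (a + 1) from by omega]
    have h2 : ((E ^ (a+1)) k j * (E ^ b) i l - (E ^ b) i l * (E ^ (a+1)) k j)
        - ((E ^ a) k j * (E ^ (b+1)) i l - (E ^ (b+1)) i l * (E ^ a) k j)
        = (E ^ a) i j * (E ^ b) k l - (E ^ b) i j * (E ^ a) k l := IH b k j i l
    rw [← sub_eq_zero]
    rw [show (E ^ a) k j * (E ^ (b+1)) i l + (E ^ a) i j * (E ^ b) k l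
          - (if j = i then (E ^ (a+b)) k l else 0)
          - (E ^ b) k j * (E ^ (a+1)) i l - (E ^ b) i j * (E ^ a) k l
          + (if j = i then (E ^ (a+b)) k l else 0)
          + (E ^ b) i l * (E ^ (a+1)) k j
          - (if l = i then (E ^ (b+(a+1))) k j else 0)
          - (E ^ (b+1)) i l * (E ^ a) k j
          + (if l = i then (E ^ (b+(a+1))) k j else 0)
          - ((E ^ (a+1)) k j * (E ^ b) i l - (E ^ b) k j * (E ^ (a+1)) i l)
        = ((E ^ a) i j * (E ^ b) k l - (E ^ b) i j * (E ^ a) k l)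
          - (((E ^ (a+1)) k j * (E ^ b) i l - (E ^ b) i l * (E ^ (a+1)) k j)
            - ((E ^ a) k j * (E ^ (b+1)) i l - (E ^ (b+1)) i l * (E ^ a) k j)) from by abel]
    rw [h2]
    abel

end Aux

private lemma monEval {A : Type*} [Ring A] [Algebra ℂ A] {n : ℕ}
    (E : Matrix (Fin n) (Fin n) A) (a : ℕ) (c : ℂ) (x y : Fin n) :
    (aeval E (monomial a c)) x y = c • (E ^ a) x y := by
  rw [aeval_monomial, ← Algebra.smul_def, Matrix.smul_apply]

private lemma polyId {A : Type*} [Ring A] [Algebra ℂ A] {n : ℕ}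
    (E : Matrix (Fin n) (Fin n) A)
    (hE : ∀ i j k l : Fin n,
      E i j * E k l - E k l * E i j =
        (if j = k then E i l else 0) - (if l = i then E k j else 0))
    (f g : ℂ[X]) (i j k l : Fin n) :
    ((aeval E (X * f)) i j * (aeval E g) k l - (aeval E g) k l * (aeval E (X * f)) i j)
      - ((aeval E f) i j * (aeval E (X * g)) k l - (aeval E (X * g)) k l * (aeval E f) i j)
    = (aeval E f) k j * (aeval E g) i l - (aeval E g) k j * (aeval E f) i l := by
  induction f using Polynomial.induction_on' generalizing g with
  | add p p' hp hp' =>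
    have h1 := hp g
    have h2 := hp' g
    simp only [mul_add, map_add, Matrix.add_apply]
    linear_combination (norm := noncomm_ring) h1 + h2
  | monomial a c =>
    induction g using Polynomial.induction_on' with
    | add r r' hr hr' =>
      simp only [mul_add, map_add, Matrix.add_apply]
      linear_combination (norm := noncomm_ring) hr + hr'
    | monomial b d =>
      have hXm : ∀ (a : ℕ) (c : ℂ), X * monomial a c = monomial (a+1) c := by
        intro a c; rw [mul_comm, monomial_mul_X]
      rw [hXm a c, hXm b d]
      simp only [monEval]
      simp only [smul_mul_assoc, mul_smul_comm, smul_smul, mul_comm d c, ← smul_sub]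
      rw [powId E hE a b i j k l]

/-- with `E` the matrix of matrix units over `U(gl_n)`, `q ≠ 0`,
and `m^{(r)}_{ij} := (𝒫_r^q(E))_{ij}` where `𝒫_r^q(x) = ∏_{k=0}^{r-1}(1 − x q^k)`,
for all `r, s ≥ 1`:
`(q^{-r} − q^{-s})[m^{(r)}_{ij}, m^{(s)}_{kl}] + q^{-s}[m^{(r)}_{ij}, m^{(s+1)}_{kl}]
  − q^{-r}[m^{(r+1)}_{ij}, m^{(s)}_{kl}] = m^{(r)}_{kj} m^{(s)}_{il} − m^{(s)}_{kj} m^{(r)}_{il}`. -/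
theorem stmt_13 {A : Type*} [Ring A] [Algebra ℂ A] {n : ℕ}
    (E : Matrix (Fin n) (Fin n) A)
    (hE : ∀ i j k l : Fin n,
      E i j * E k l - E k l * E i j =
        (if j = k then E i l else 0) - (if l = i then E k j else 0))
    (q : ℂ) (hq : q ≠ 0)
    (m : ℕ → Fin n → Fin n → A)
    (hm : ∀ r i j,
      m r i j = (aeval E (∏ k ∈ Finset.range r, (1 - X * C (q ^ k)))) i j)
    (r s : ℕ) (hr : 1 ≤ r) (hs : 1 ≤ s) (i j k l : Fin n) :
    ((q ^ r)⁻¹ - (q ^ s)⁻¹) • (m r i j * m s k l - m s k l * m r i j)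
      + (q ^ s)⁻¹ • (m r i j * m (s + 1) k l - m (s + 1) k l * m r i j)
      - (q ^ r)⁻¹ • (m (r + 1) i j * m s k l - m s k l * m (r + 1) i j)
      = m r k j * m s i l - m s k j * m r i l := by
  set P : ℕ → ℂ[X] := fun r => ∏ k ∈ Finset.range r, (1 - X * C (q ^ k)) with hP
  have hXP : ∀ t : ℕ, X * P t = C ((q ^ t)⁻¹) * (P t - P (t + 1)) := by
    intro t
    have h1 : P t - P (t + 1) = C (q ^ t) * (X * P t) := by
      simp only [hP, Finset.prod_range_succ]
      ring
    rw [h1, ← mul_assoc, ← C_mul, inv_mul_cancel₀ (pow_ne_zero t hq), C_1, one_mul]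
  have hmm : ∀ (t : ℕ) (x y : Fin n),
      (aeval E (X * P t)) x y = (q ^ t)⁻¹ • (m t x y - m (t + 1) x y) := by
    intro t x y
    rw [hXP t, map_mul, aeval_C, ← Algebra.smul_def, Matrix.smul_apply, map_sub,
      Matrix.sub_apply, ← hm, ← hm]
  have key := polyId E hE (P r) (P s) i j k l
  rw [hmm r i j, hmm s k l] at key
  simp only [hP, ← hm] at key
  rw [← key]
  simp only [smul_mul_assoc, mul_smul_comm, smul_sub, sub_smul, sub_mul, mul_sub]
  module
end

section
/- Fix a representation ψ: 𝒜 → End(ℂ^m) of a Lie algebra 𝒜. On a vector space spanned by symbols x_{ij}(a), a ∈ 𝒜, 1 ≤ i,j ≤ m (linear in a), the bracket [x_{ij}(a), x_{kl}(b)] := ψ(a)_{li} x_{kj}(b) − ψ(b)_{jk} x_{il}(a) satisfies bilinearity, antisymmetry, and the Jacobi identity, hence defines a Lie algebra structure (the ternary Lie algebra 𝒜^{tern}), provided the symbols x_{ij}(a) are realized as the operators D̃_{ij}(a) = Σ_k ψ(a)_{ki} t^{(1)}_{jk} inside U(gl_m) and are taken with the induced bracket. -/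
attribute [local instance 100] LieRing.ofAssociativeRing

/-- realize the symbols `x_{ij}(a)` as
`D̃_{ij}(a) = Σ_k ψ(a)_{ki} t^{(1)}_{jk}` inside `U(gl_m)` (where the `t^{(1)}_{jk}`
satisfy the `gl_m` relations).  Then the span of these elements is closed under
the commutator and the induced bracket is
`[x_{ij}(a), x_{kl}(b)] = ψ(a)_{li} x_{kj}(b) − ψ(b)_{jk} x_{il}(a)`,
so it defines a Lie algebra structure (the ternary Lie algebra `𝒜^{tern}`):
bilinearity, antisymmetry and Jacobi hold automatically for the commutator. -/
theorem stmt_16 {Y L : Type*} [Ring Y] [Algebra ℂ Y]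
    [LieRing L] [LieAlgebra ℂ L] {m : ℕ}
    (t1 : Fin m → Fin m → Y)
    (hgl : ∀ i j k l : Fin m,
      t1 i j * t1 k l - t1 k l * t1 i j
        = (if k = j then t1 i l else 0) - (if i = l then t1 k j else 0))
    (ψ : L →ₗ⁅ℂ⁆ Matrix (Fin m) (Fin m) ℂ)
    (Dt : L → Fin m → Fin m → Y)
    (hDt : ∀ a i j, Dt a i j = ∑ k, (ψ a) k i • t1 j k)
    (a b : L) (i j k l : Fin m) :
    Dt a i j * Dt b k l - Dt b k l * Dt a i j
        = (ψ a) l i • Dt b k j - (ψ b) j k • Dt a i l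
    ∧ Dt a i j * Dt b k l - Dt b k l * Dt a i j
        ∈ Submodule.span ℂ
            (Set.range fun x : L × Fin m × Fin m => Dt x.1 x.2.1 x.2.2) := by
  have key : Dt a i j * Dt b k l - Dt b k l * Dt a i j
      = (ψ a) l i • Dt b k j - (ψ b) j k • Dt a i l := by
    rw [hDt, hDt, hDt, hDt]
    rw [Finset.sum_mul_sum, Finset.sum_mul_sum]
    rw [Finset.sum_comm (f := fun p q => (ψ b p k • t1 l p) * (ψ a q i • t1 j q))]
    rw [← Finset.sum_sub_distrib]
    have step : ∀ p : Fin m,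
        (∑ q, (ψ a p i • t1 j p) * (ψ b q k • t1 l q))
          - ∑ q, (ψ b q k • t1 l q) * (ψ a p i • t1 j p)
        = ∑ q, ((ψ a p i * ψ b q k) •
            (t1 j p * t1 l q - t1 l q * t1 j p)) := by
      intro p
      rw [← Finset.sum_sub_distrib]
      refine Finset.sum_congr rfl fun q _ => ?_
      rw [smul_mul_assoc, smul_mul_assoc, mul_smul_comm, mul_smul_comm,
        smul_smul, smul_smul, smul_sub, mul_comm (ψ b q k)]
    calc (∑ p, ((∑ q, (ψ a p i • t1 j p) * (ψ b q k • t1 l q))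
            - ∑ q, (ψ b q k • t1 l q) * (ψ a p i • t1 j p)))
        = ∑ p, ∑ q, ((ψ a p i * ψ b q k) •
            ((if l = p then t1 j q else 0) - (if j = q then t1 l p else 0))) := by
          refine Finset.sum_congr rfl fun p _ => ?_
          rw [step p]
          refine Finset.sum_congr rfl fun q _ => ?_
          rw [hgl]
      _ = ∑ p, ∑ q, ((ψ a p i * ψ b q k) • (if l = p then t1 j q else 0)
            - (ψ a p i * ψ b q k) • (if j = q then t1 l p else 0)) := by
          simp [smul_sub]
      _ = (ψ a) l i • Dt b k j - (ψ b) j k • Dt a i l := by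
          rw [hDt, hDt]
          simp only [Finset.sum_sub_distrib, Finset.smul_sum, smul_smul, smul_ite, smul_zero]
          congr 1
          · rw [Finset.sum_comm]
            refine Finset.sum_congr rfl fun q _ => ?_
            rw [Finset.sum_ite_eq (Finset.univ) l (fun p => (ψ a p i * ψ b q k) • t1 j q)]
            simp [mul_comm]
          · refine Finset.sum_congr rfl fun p _ => ?_
            rw [Finset.sum_ite_eq (Finset.univ) j (fun q => (ψ a p i * ψ b q k) • t1 l p)]
            simp [mul_comm]
    rw [hDt, hDt]
  refine ⟨key, ?_⟩
  rw [key]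
  apply sub_mem
  · exact Submodule.smul_mem _ _ (Submodule.subset_span ⟨(b, k, j), rfl⟩)
  · exact Submodule.smul_mem _ _ (Submodule.subset_span ⟨(a, i, l), rfl⟩)
end

section
/- For the Lie algebra sl(2) with basis e₁, e₂, e₃ satisfying [e₁,e₂] = e₃, [e₃,e₂] = −2e₂, [e₃,e₁] = 2e₁, and ψ = ad the adjoint representation on V = sl(2) ≅ ℂ³, the ternary Lie algebra sl(2)^{tern} (the span of the elements D̃_{ij}(e_k) = Σ_m (ad e_k)_{mi} t^{(1)}_{jm}, 1 ≤ i,j,k ≤ 3, inside gl(3) realized by t^{(1)}_{jm} = E_{jm}) is isomorphic to gl(3); in particular it has dimension 9. -/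
/-- for `sl(2)` with basis `e₁, e₂, e₃` (`[e₁,e₂] = e₃`,
`[e₃,e₂] = −2e₂`, `[e₃,e₁] = 2e₁`) and `ψ = ad` (whose matrices in this basis
are `adM 0, adM 1, adM 2` below), the ternary Lie algebra `sl(2)^{tern}`, i.e.
the span of the elements `D̃_{ij}(e_k) = Σ_m (ad e_k)_{mi} E_{jm}` inside
`gl(3)`, is all of `gl(3)`; in particular it has dimension 9. -/
theorem stmt_17
    (adM : Fin 3 → Matrix (Fin 3) (Fin 3) ℂ)
    (h0 : adM 0 = !![0, 0, -2; 0, 0, 0; 0, 1, 0])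
    (h1 : adM 1 = !![0, 0, 0; 0, 0, 2; -1, 0, 0])
    (h2 : adM 2 = !![2, 0, 0; 0, -2, 0; 0, 0, 0]) :
    Submodule.span ℂ
        (Set.range fun x : Fin 3 × Fin 3 × Fin 3 =>
          ∑ m : Fin 3, (adM x.1) m x.2.1 • Matrix.single x.2.2 m (1 : ℂ))
      = (⊤ : Submodule ℂ (Matrix (Fin 3) (Fin 3) ℂ))
    ∧ Module.finrank ℂ (Matrix (Fin 3) (Fin 3) ℂ) = 9 := by
  constructor
  · set S := Submodule.span ℂ
        (Set.range fun x : Fin 3 × Fin 3 × Fin 3 =>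
          ∑ m : Fin 3, (adM x.1) m x.2.1 • Matrix.single x.2.2 m (1 : ℂ)) with hS
    have mem : ∀ x : Fin 3 × Fin 3 × Fin 3,
        (∑ m : Fin 3, (adM x.1) m x.2.1 • Matrix.single x.2.2 m (1 : ℂ)) ∈ S :=
      fun x => Submodule.subset_span (Set.mem_range_self x)
    have key : ∀ j m : Fin 3, Matrix.single j m (1 : ℂ) ∈ S := by
      intro j m
      fin_cases m
      · have h := Submodule.smul_mem S ((2:ℂ)⁻¹) (mem ((2:Fin 3), (0:Fin 3), j))
        have e : ((2:ℂ)⁻¹) • (∑ m : Fin 3, (adM 2) m 0 • Matrix.single j m (1 : ℂ))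
            = Matrix.single j 0 (1:ℂ) := by
          simp [h2, Fin.sum_univ_three, Matrix.cons_val_zero, Matrix.cons_val_one,
            Matrix.head_cons, Matrix.cons_val_two, Matrix.tail_cons, Matrix.vecHead,
            Matrix.vecTail, Matrix.smul_single, smul_smul]
        rwa [e] at h
      · have h := Submodule.smul_mem S (-(2:ℂ)⁻¹) (mem ((2:Fin 3), (1:Fin 3), j))
        have e : (-(2:ℂ)⁻¹) • (∑ m : Fin 3, (adM 2) m 1 • Matrix.single j m (1 : ℂ))
            = Matrix.single j 1 (1:ℂ) := by
          simp [h2, Fin.sum_univ_three, Matrix.cons_val_zero, Matrix.cons_val_one,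
            Matrix.head_cons, Matrix.cons_val_two, Matrix.tail_cons, Matrix.vecHead,
            Matrix.vecTail, Matrix.smul_single, smul_smul]
          rw [← neg_one_smul ℂ, Matrix.smul_single]
          norm_num
        rwa [e] at h
      · have h := mem ((0:Fin 3), (1:Fin 3), j)
        have e : (∑ m : Fin 3, (adM 0) m 1 • Matrix.single j m (1 : ℂ))
            = Matrix.single j 2 (1:ℂ) := by
          simp [h0, Fin.sum_univ_three, Matrix.cons_val_zero, Matrix.cons_val_one,
            Matrix.head_cons, Matrix.cons_val_two, Matrix.tail_cons, Matrix.vecHead,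
            Matrix.vecTail, Matrix.smul_single]
        rwa [e] at h
    rw [eq_top_iff]
    intro A _
    rw [Matrix.matrix_eq_sum_single A]
    refine Submodule.sum_mem _ fun i _ => Submodule.sum_mem _ fun k _ => ?_
    have : Matrix.single i k (A i k) = (A i k) • Matrix.single i k (1:ℂ) := by
      rw [Matrix.smul_single, smul_eq_mul, mul_one]
    rw [this]
    exact Submodule.smul_mem _ _ (key i k)
  · simp [Module.finrank_matrix]
end

section
/- Substituting X̃^{(r)}_{ij}(a) := h^{r-1} X^{(r)}_{ij}(a) into the polarized ternary relations yields [X̃^{(r)}_{ij}(a), X̃^{(s)}_{kl}(b)] = ψ(a)_{il} X̃^{(r+s-1)}_{kj}(b) − ψ(b)_{kj} X̃^{(r+s-1)}_{il}(a) + h·Σ_{m=1}^{min(r,s)-1} ( X̃^{(m)}_{il}(a) X̃^{(r+s-1-m)}_{kj}(b) − X̃^{(r+s-1-m)}_{il}(a) X̃^{(m)}_{kj}(b) ), for all r, s ≥ 1; in particular at h = 0 the elements X̃^{(r)}_{ij}(a) satisfy the Lie relations of the current algebra 𝒜^{tern}[x] with X̃^{(r)} corresponding to degree x^{r-1}. 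-/
attribute [local instance 100] LieRing.ofAssociativeRing

/-- substituting `X̃^{(r)}_{ij}(a) := h^{r-1} X^{(r)}_{ij}(a)` into the
polarized ternary relations yields, for all `r, s ≥ 1`:
`[X̃^{(r)}_{ij}(a), X̃^{(s)}_{kl}(b)]
  = ψ(a)_{il} X̃^{(r+s-1)}_{kj}(b) − ψ(b)_{kj} X̃^{(r+s-1)}_{il}(a)
    + h·Σ_{m=1}^{min(r,s)-1} (X̃^{(m)}_{il}(a) X̃^{(r+s-1-m)}_{kj}(b)
        − X̃^{(r+s-1-m)}_{il}(a) X̃^{(m)}_{kj}(b))`;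
at `h = 0` these are the Lie relations of the current algebra `𝒜^{tern}[x]`. -/
theorem stmt_19 {Y L : Type*} [Ring Y] [Algebra ℂ Y]
    [LieRing L] [LieAlgebra ℂ L] {m : ℕ}
    (ψ : L →ₗ⁅ℂ⁆ Matrix (Fin m) (Fin m) ℂ)
    (X : ℕ → Fin m → Fin m → L → Y)
    (hX0 : ∀ (i j : Fin m) (a : L), X 0 i j a = algebraMap ℂ Y ((ψ a) i j))
    (hrel : ∀ (r s : ℕ) (i j k l : Fin m) (a b : L),
      X r i j a * X s k l b - X s k l b * X r i j a
        = ∑ p ∈ Finset.Icc 1 (min r s),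
            (X (p - 1) i l a * X (r + s - p) k j b
              - X (r + s - p) i l a * X (p - 1) k j b))
    (h : ℂ)
    (Xt : ℕ → Fin m → Fin m → L → Y)
    (hXt : ∀ (r : ℕ) (i j : Fin m) (a : L), Xt r i j a = h ^ (r - 1) • X r i j a)
    (r s : ℕ) (hr : 1 ≤ r) (hs : 1 ≤ s) (i j k l : Fin m) (a b : L) :
    Xt r i j a * Xt s k l b - Xt s k l b * Xt r i j a
      = (ψ a) i l • Xt (r + s - 1) k j b - (ψ b) k j • Xt (r + s - 1) i l a
        + h • ∑ p ∈ Finset.Icc 1 (min r s - 1),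
            (Xt p i l a * Xt (r + s - 1 - p) k j b
              - Xt (r + s - 1 - p) i l a * Xt p k j b) := by
  obtain ⟨r', rfl⟩ : ∃ r', r = r' + 1 := ⟨r - 1, by omega⟩
  obtain ⟨s', rfl⟩ : ∃ s', s = s' + 1 := ⟨s - 1, by omega⟩
  simp only [hXt, Nat.add_sub_cancel]
  have hmin : min (r' + 1) (s' + 1) = min r' s' + 1 := by omega
  have hmin' : min (r' + 1) (s' + 1) - 1 = min r' s' := by omega
  have hrs : r' + 1 + (s' + 1) - 1 = r' + s' + 1 := by omega
  rw [hmin', hrs, Nat.add_sub_cancel,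
    smul_mul_smul_comm, smul_mul_smul_comm, mul_comm (h ^ s') (h ^ r'),
    ← smul_sub, hrel, hmin]
  -- peel off the p = 1 term
  rw [← Finset.Ico_add_one_right_eq_Icc, Finset.sum_eq_sum_Ico_succ_bot (by omega), Finset.Ico_add_one_right_eq_Icc]
  have hmap : Finset.Icc 2 (min r' s' + 1)
      = (Finset.Icc 1 (min r' s')).map (addRightEmbedding 1) := by
    rw [Finset.map_add_right_Icc]
  rw [hmap, Finset.sum_map]
  simp only [addRightEmbedding_apply, Nat.add_sub_cancel, hX0]
  rw [smul_add, Finset.smul_sum, Finset.smul_sum]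
  have h1 : r' + 1 + (s' + 1) - 1 = r' + s' + 1 := by omega
  rw [h1]
  congr 1
  · -- the p = 1 term
    rw [← Algebra.smul_def, Algebra.algebraMap_eq_smul_one, mul_smul_comm, mul_one,
      smul_sub, ← pow_add, smul_comm (h ^ (r' + s')) ((ψ a) i l),
      smul_comm (h ^ (r' + s')) ((ψ b) k j)]
  · -- the remaining sum
    apply Finset.sum_congr rfl
    intro p hp
    simp only [Finset.mem_Icc] at hp
    have e1 : r' + 1 + (s' + 1) - (p + 1) = r' + s' + 1 - p := by omega
    have e2 : r' + s' + 1 - p - 1 = r' + s' - p := by omega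
    rw [e1, e2, smul_mul_smul_comm, smul_mul_smul_comm, mul_comm (h ^ (r' + s' - p)) (h ^ (p-1)),
      ← smul_sub, smul_smul]
    have hc : h * (h ^ (p - 1) * h ^ (r' + s' - p)) = h ^ (r' + s') := by
      have e : 1 + (p - 1 + (r' + s' - p)) = r' + s' := by omega
      calc h * (h ^ (p - 1) * h ^ (r' + s' - p))
          = h ^ 1 * h ^ (p - 1 + (r' + s' - p)) := by rw [pow_add, pow_one]
        _ = h ^ (1 + (p - 1 + (r' + s' - p))) := (pow_add h _ _).symm
        _ = h ^ (r' + s') := by rw [e]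
    rw [hc, pow_add]
end
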